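/- arXiv:math/9912247 — 6 statements merged into one kernel-verified Lean document; each statement's English description precedes it below -/
import Mathlib

section
/- Let L be a subgroup (lattice) of ℤ^n. Then the following two conditions are equivalent: (d) L is the image of an injective ℤ-linear map given by an integer n×m matrix B with linearly independent columns, all of whose maximal (m×m) minors lie in the set {0, 1, −1}; (e) L is the kernel of a ℤ-linear map given by an integer d×n matrix A with linearly independent rows, such that there exists an integer m with all maximal (d×d) minors of A lying in the set {0, m, −m}. -/
open Matrix

/-- equality up to sign -/
def PMeq {R : Type*} [Ring R] (x y : R) : Prop := x = y ∨ x = -y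

lemma PMeq.symm {R : Type*} [Ring R] {x y : R} (h : PMeq x y) : PMeq y x := by
  rcases h with h | h <;> [left; right] <;> simp [h]

lemma PMeq.trans {R : Type*} [Ring R] {x y z : R} (h : PMeq x y) (h' : PMeq y z) : PMeq x z := by
  rcases h with h | h <;> rcases h' with h' | h' <;> simp [PMeq, h, h']

lemma PMeq.neg_one_pow {R : Type*} [Ring R] (k : ℕ) (x : R) : PMeq ((-1 : R) ^ k * x) x := by
  rcases Nat.even_or_odd k with he | ho
  · left; rw [he.neg_one_pow, one_mul]
  · right; rw [ho.neg_one_pow, neg_one_mul]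

lemma PMeq.mem_symm_set {x y a : ℤ} (h : PMeq x y) (hy : y ∈ ({0, a, -a} : Set ℤ)) :
    x ∈ ({0, a, -a} : Set ℤ) := by
  simp only [Set.mem_insert_iff, Set.mem_singleton_iff] at hy ⊢
  rcases h with h | h <;> rcases hy with hy | hy | hy <;> simp [h, hy]

section helpers
variable {R : Type*} [CommRing R]

lemma det_submatrix_equiv_equiv {ι κ : Type*} [DecidableEq ι] [Fintype ι] [DecidableEq κ]
    [Fintype κ] (M : Matrix ι ι R) (e f : κ ≃ ι) :
    PMeq (M.submatrix ⇑e ⇑f).det M.det := by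
  have h : M.submatrix ⇑e ⇑f = (M.submatrix ⇑e ⇑e).submatrix id ⇑(f.trans e.symm) := by
    ext i j; simp
  rw [h, det_permute', det_submatrix_equiv_self]
  rcases Int.units_eq_one_or (Equiv.Perm.sign (f.trans e.symm)) with h1 | h1 <;>
    rw [h1] <;> simp [PMeq]

lemma det_submatrix_col_pm {α ι β : Type*} [DecidableEq α] [DecidableEq ι] [Fintype ι]
    [DecidableEq β] [Fintype β] (M : Matrix β α R) (e : ι ≃ β) (c : ι → α)
    (hc : Function.Injective c) (c' : β ↪ α) (h : Set.range c = Set.range ⇑c') :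
    PMeq (M.submatrix ⇑e c).det (M.submatrix id ⇑c').det := by
  have hex : ∀ i : ι, ∃ j : β, c' j = c i := by
    intro i
    have : c i ∈ Set.range ⇑c' := h ▸ Set.mem_range_self i
    exact this
  choose f0 hf0 using hex
  have hinj : Function.Injective f0 := fun i j hij => hc (by rw [← hf0 i, ← hf0 j, hij])
  have hbij : Function.Bijective f0 := (Fintype.bijective_iff_injective_and_card f0).2
    ⟨hinj, Fintype.card_congr e⟩
  have key : M.submatrix ⇑e c = (M.submatrix id ⇑c').submatrix ⇑e ⇑(Equiv.ofBijective f0 hbij) := by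
    ext i j
    simp [Equiv.ofBijective, hf0]
  rw [key]
  exact det_submatrix_equiv_equiv _ _ _

lemma det_submatrix_row_pm {α ι β : Type*} [DecidableEq α] [DecidableEq ι] [Fintype ι]
    [DecidableEq β] [Fintype β] (M : Matrix α β R) (e : ι ≃ β) (r : ι → α)
    (hr : Function.Injective r) (r' : β ↪ α) (h : Set.range r = Set.range ⇑r') :
    PMeq (M.submatrix r ⇑e).det (M.submatrix ⇑r' id).det := by
  have := det_submatrix_col_pm (R := R) M.transpose e r hr r' h
  rwa [← transpose_submatrix, ← transpose_submatrix, det_transpose, det_transpose] at this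

end helpers

lemma Finset.exists_orderEmbOfFin_eq {γ : Type*} [LinearOrder γ] (s : Finset γ) {k : ℕ}
    (h : s.card = k) {i : γ} (hi : i ∈ s) : ∃ y, s.orderEmbOfFin h y = i := by
  have hr := s.range_orderEmbOfFin h
  have : i ∈ Set.range ⇑(s.orderEmbOfFin h) := by rw [hr]; exact hi
  exact this

open Matrix in
lemma core_pm {m d : ℕ} (D : Matrix (Fin d) (Fin m) ℤ)
    (c : Fin d ↪ (Fin m ⊕ Fin d)) (r : Fin m ↪ (Fin m ⊕ Fin d))
    (hdisj : ∀ i j, c i ≠ r j) :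
    PMeq ((fromCols D 1).submatrix id ⇑c).det
      ((fromRows 1 (-D)).submatrix ⇑r id).det := by
  classical
  set T : Finset (Fin m ⊕ Fin d) := Finset.univ.map c with hT
  set Rs : Finset (Fin m ⊕ Fin d) := Finset.univ.map r with hRs
  have hTcard : T.card = d := by simp [hT]
  have hRscard : Rs.card = m := by simp [hRs]
  have hRsTc : Rs = Tᶜ := by
    apply Finset.eq_of_subset_of_card_le
    · intro x hx
      simp only [hRs, Finset.mem_map, Finset.mem_univ, true_and] at hx
      obtain ⟨j, rfl⟩ := hx
      simp only [Finset.mem_compl, hT, Finset.mem_map, Finset.mem_univ, true_and]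
      rintro ⟨i, hi⟩
      exact hdisj i j hi
    · rw [Finset.card_compl, hTcard, hRscard]
      simp [Fintype.card_sum]
  set t₁ : Finset (Fin m) := T.toLeft with ht₁
  set t₂ : Finset (Fin d) := T.toRight with ht₂
  set a := t₁.card with ha
  set b := t₂.card with hb
  have hab : a + b = d := by
    rw [ha, hb, Finset.card_toLeft_add_card_toRight, hTcard]
  have ht₁c : ∀ i, i ∈ t₁ᶜ ↔ Sum.inl i ∈ Rs := by
    intro i; rw [hRsTc]; simp [ht₁]
  have ht₂c : ∀ i, i ∈ t₂ᶜ ↔ Sum.inr i ∈ Rs := by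
    intro i; rw [hRsTc]; simp [ht₂]
  have ha'b' : t₁ᶜ.card + t₂ᶜ.card = m := by
    have h1 : t₁ᶜ = Rs.toLeft := by ext i; rw [Finset.mem_toLeft]; exact ht₁c i
    have h2 : t₂ᶜ = Rs.toRight := by ext i; rw [Finset.mem_toRight]; exact ht₂c i
    rw [h1, h2, Finset.card_toLeft_add_card_toRight, hRscard]
  have hb'a : t₂ᶜ.card = a := by
    have := Finset.card_compl t₂; simp only [Fintype.card_fin] at this; omega
  set a' := t₁ᶜ.card with ha'
  -- enumerations
  set u₁ := t₁.orderEmbOfFin (rfl : t₁.card = a) with hu₁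
  set u₂ := t₂.orderEmbOfFin (rfl : t₂.card = b) with hu₂
  set v₁ := t₁ᶜ.orderEmbOfFin (rfl : t₁ᶜ.card = a') with hv₁
  set v₂ := t₂ᶜ.orderEmbOfFin hb'a with hv₂
  have hu₁m : ∀ i, u₁ i ∈ t₁ := fun i => t₁.orderEmbOfFin_mem _ i
  have hu₂m : ∀ i, u₂ i ∈ t₂ := fun i => t₂.orderEmbOfFin_mem _ i
  have hv₁m : ∀ i, v₁ i ∈ t₁ᶜ := fun i => t₁ᶜ.orderEmbOfFin_mem _ i
  have hv₂m : ∀ i, v₂ i ∈ t₂ᶜ := fun i => t₂ᶜ.orderEmbOfFin_mem _ i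
  -- A-side
  set rowA : Fin b ⊕ Fin a → Fin d := Sum.elim ⇑u₂ ⇑v₂ with hrowA
  have hrowAinj : Function.Injective rowA := by
    rintro (x | x) (y | y) hxy <;> simp only [hrowA, Sum.elim_inl, Sum.elim_inr] at hxy
    · exact congrArg Sum.inl (u₂.injective hxy)
    · exact absurd (hxy ▸ hu₂m x) (by simpa using hv₂m y)
    · exact absurd (hxy.symm ▸ hu₂m y) (by simpa using hv₂m x)
    · exact congrArg Sum.inr (v₂.injective hxy)
  have hrowAbij : Function.Bijective rowA :=
    (Fintype.bijective_iff_injective_and_card rowA).2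
      ⟨hrowAinj, by simp only [Fintype.card_sum, Fintype.card_fin]; omega⟩
  set colA : Fin b ⊕ Fin a → (Fin m ⊕ Fin d) :=
    Sum.elim (Sum.inr ∘ ⇑u₂) (Sum.inl ∘ ⇑u₁) with hcolA
  have hcolAinj : Function.Injective colA := by
    rintro (x | x) (y | y) hxy <;>
      simp only [hcolA, Sum.elim_inl, Sum.elim_inr, Function.comp_apply,
        Sum.inr.injEq, Sum.inl.injEq, reduceCtorEq] at hxy
    · exact congrArg Sum.inl (u₂.injective hxy)
    · exact congrArg Sum.inr (u₁.injective hxy)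
  have hrangecolA : Set.range colA = Set.range ⇑c := by
    have hTr : (Set.range ⇑c) = ↑T := by simp [hT, Finset.coe_map]
    rw [hTr]
    ext x
    constructor
    · rintro ⟨(y | y), rfl⟩
      · simpa [hcolA, ht₂] using hu₂m y
      · simpa [hcolA, ht₁] using hu₁m y
    · intro hx
      cases x with
      | inl i =>
        obtain ⟨y, hy⟩ := t₁.exists_orderEmbOfFin_eq (rfl : t₁.card = a)
          (Finset.mem_toLeft.2 hx)
        exact ⟨Sum.inr y, by simp [hcolA, ← hu₁, hy]; exact hy⟩
      | inr i =>
        obtain ⟨y, hy⟩ := t₂.exists_orderEmbOfFin_eq (rfl : t₂.card = b)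
          (Finset.mem_toRight.2 hx)
        exact ⟨Sum.inl y, by simp [hcolA, ← hu₂, hy]; exact hy⟩
  have stepA : PMeq ((fromCols D 1).submatrix ⇑(Equiv.ofBijective rowA hrowAbij) colA).det
      ((fromCols D 1).submatrix id ⇑c).det :=
    det_submatrix_col_pm _ (Equiv.ofBijective rowA hrowAbij) colA hcolAinj c hrangecolA
  have blockA : (fromCols D 1).submatrix rowA colA =
      fromBlocks (1 : Matrix (Fin b) (Fin b) ℤ) (D.submatrix ⇑u₂ ⇑u₁) 0 (D.submatrix ⇑v₂ ⇑u₁) := by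
    ext (i | i) (j | j) <;>
      simp only [submatrix_apply, hrowA, hcolA, Sum.elim_inl, Sum.elim_inr,
        Function.comp_apply, fromCols, of_apply, fromBlocks_apply₁₁, fromBlocks_apply₁₂,
        fromBlocks_apply₂₁, fromBlocks_apply₂₂, one_apply, Matrix.zero_apply]
    · simp [u₂.injective.eq_iff]
    · rw [if_neg]
      intro hh
      exact absurd (hh ▸ hu₂m j) (by simpa using hv₂m i)
  have detA : ((fromCols D 1).submatrix ⇑(Equiv.ofBijective rowA hrowAbij) colA).det =
      (D.submatrix ⇑v₂ ⇑u₁).det := by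
    have : (fromCols D 1).submatrix ⇑(Equiv.ofBijective rowA hrowAbij) colA =
        (fromCols D 1).submatrix rowA colA := rfl
    rw [this, blockA, det_fromBlocks_zero₂₁, det_one, one_mul]
  -- B-side
  set rowB : Fin a' ⊕ Fin a → (Fin m ⊕ Fin d) :=
    Sum.elim (Sum.inl ∘ ⇑v₁) (Sum.inr ∘ ⇑v₂) with hrowB
  have hrowBinj : Function.Injective rowB := by
    rintro (x | x) (y | y) hxy <;>
      simp only [hrowB, Sum.elim_inl, Sum.elim_inr, Function.comp_apply,
        Sum.inr.injEq, Sum.inl.injEq, reduceCtorEq] at hxy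
    · exact congrArg Sum.inl (v₁.injective hxy)
    · exact congrArg Sum.inr (v₂.injective hxy)
  have hrangerowB : Set.range rowB = Set.range ⇑r := by
    have hRr : (Set.range ⇑r) = ↑Rs := by simp [hRs, Finset.coe_map]
    rw [hRr]
    ext x
    constructor
    · rintro ⟨(y | y), rfl⟩
      · simpa [hrowB, Finset.mem_coe] using (ht₁c (v₁ y)).1 (hv₁m y)
      · simpa [hrowB, Finset.mem_coe] using (ht₂c (v₂ y)).1 (hv₂m y)
    · intro hx
      cases x with
      | inl i =>
        obtain ⟨y, hy⟩ := t₁ᶜ.exists_orderEmbOfFin_eq (rfl : t₁ᶜ.card = a')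
          ((ht₁c i).2 hx)
        exact ⟨Sum.inl y, by simp [hrowB, ← hv₁, hy]; exact hy⟩
      | inr i =>
        obtain ⟨y, hy⟩ := t₂ᶜ.exists_orderEmbOfFin_eq hb'a ((ht₂c i).2 hx)
        exact ⟨Sum.inr y, by simp [hrowB, ← hv₂, hy]; exact hy⟩
  set colB : Fin a' ⊕ Fin a → Fin m := Sum.elim ⇑v₁ ⇑u₁ with hcolB
  have hcolBinj : Function.Injective colB := by
    rintro (x | x) (y | y) hxy <;> simp only [hcolB, Sum.elim_inl, Sum.elim_inr] at hxy
    · exact congrArg Sum.inl (v₁.injective hxy)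
    · exact absurd (hxy ▸ hu₁m y) (by simpa using hv₁m x)
    · exact absurd (hxy.symm ▸ hu₁m x) (by simpa using hv₁m y)
    · exact congrArg Sum.inr (u₁.injective hxy)
  have hcolBbij : Function.Bijective colB :=
    (Fintype.bijective_iff_injective_and_card colB).2
      ⟨hcolBinj, by simp only [Fintype.card_sum, Fintype.card_fin]; omega⟩
  have stepB : PMeq ((fromRows 1 (-D)).submatrix rowB ⇑(Equiv.ofBijective colB hcolBbij)).det
      ((fromRows 1 (-D)).submatrix ⇑r id).det :=
    det_submatrix_row_pm _ (Equiv.ofBijective colB hcolBbij) rowB hrowBinj r hrangerowB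
  have blockB : (fromRows 1 (-D)).submatrix rowB colB =
      fromBlocks (1 : Matrix (Fin a') (Fin a') ℤ) 0
        ((-D).submatrix ⇑v₂ ⇑v₁) ((-D).submatrix ⇑v₂ ⇑u₁) := by
    ext (i | i) (j | j) <;>
      simp only [submatrix_apply, hrowB, hcolB, Sum.elim_inl, Sum.elim_inr,
        Function.comp_apply, fromRows_apply_inl, fromRows_apply_inr, of_apply, fromBlocks_apply₁₁, fromBlocks_apply₁₂,
        fromBlocks_apply₂₁, fromBlocks_apply₂₂, one_apply, Matrix.zero_apply]
    · simp [v₁.injective.eq_iff]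
    · rw [if_neg]
      intro hh
      exact absurd (hh ▸ hu₁m j) (by simpa using hv₁m i)
  have detB : ((fromRows 1 (-D)).submatrix rowB ⇑(Equiv.ofBijective colB hcolBbij)).det =
      (-1 : ℤ) ^ a * (D.submatrix ⇑v₂ ⇑u₁).det := by
    have heq : (fromRows 1 (-D)).submatrix rowB ⇑(Equiv.ofBijective colB hcolBbij) =
        (fromRows 1 (-D)).submatrix rowB colB := rfl
    have hneg : ((-D).submatrix ⇑v₂ ⇑u₁) = -(D.submatrix ⇑v₂ ⇑u₁) := rfl
    rw [heq, blockB, det_fromBlocks_zero₁₂, det_one, one_mul, hneg, det_neg,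
      Fintype.card_fin]
  -- combine
  rw [detA] at stepA
  rw [detB] at stepB
  exact stepA.symm.trans ((stepB.symm.trans (PMeq.neg_one_pow a _)).symm)

namespace LawrenceAux
open Matrix

variable {m d n : ℕ} (ρ : (Fin m ⊕ Fin d) ≃ Fin n) (D : Matrix (Fin d) (Fin m) ℤ)

/-- the kernel-side matrix -/
noncomputable def Amat : Matrix (Fin d) (Fin n) ℤ := (fromCols D 1).submatrix id ⇑ρ.symm

/-- the image-side matrix -/
noncomputable def Bmat : Matrix (Fin n) (Fin m) ℤ := (fromRows 1 (-D)).submatrix ⇑ρ.symm id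

lemma Bmat_cols_li : LinearIndependent ℤ (Bmat ρ D).transpose := by
  refine Fintype.linearIndependent_iff.2 ?_
  intro g hg i
  have := congrFun hg (ρ (Sum.inl i))
  simpa [Bmat, Finset.sum_apply, transpose_apply, submatrix_apply, fromRows_apply_inl,
    one_apply, Finset.sum_ite_eq', mul_comm] using this

lemma Amat_rows_li : LinearIndependent ℤ (Amat ρ D) := by
  refine Fintype.linearIndependent_iff.2 ?_
  intro g hg k
  have := congrFun hg (ρ (Sum.inr k))
  simpa [Amat, Finset.sum_apply, submatrix_apply, fromCols,
    one_apply, Finset.sum_ite_eq', mul_comm] using this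

lemma Amat_mulVec (y : Fin n → ℤ) :
    (Amat ρ D).mulVec y = D.mulVec (y ∘ ρ ∘ Sum.inl) + (y ∘ ρ ∘ Sum.inr) := by
  funext i
  have h1 : (Amat ρ D).mulVec y i = ∑ w : Fin m ⊕ Fin d, fromCols D 1 i w * y (ρ w) := by
    rw [mulVec, dotProduct]
    exact (Equiv.sum_comp ρ (fun j => (Amat ρ D) i j * y j)).symm.trans
      (Finset.sum_congr rfl (fun w _ => by simp [Amat, submatrix_apply]))
  rw [h1, Fintype.sum_sum_type]
  simp [fromCols, mulVec, dotProduct, one_apply, Finset.sum_ite_eq', Function.comp]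

lemma Bmat_mulVec (x : Fin m → ℤ) (j : Fin n) :
    (Bmat ρ D).mulVec x j = Sum.elim x (-(D.mulVec x)) (ρ.symm j) := by
  have h0 : (Bmat ρ D).mulVec x j = (fromRows 1 (-D)).mulVec x (ρ.symm j) := rfl
  rw [h0]
  cases h : ρ.symm j with
  | inl i => simp [fromRows_apply_inl, mulVec, dotProduct, one_apply, Finset.sum_ite_eq']
  | inr k => simp [fromRows_apply_inr, mulVec, dotProduct, neg_mul]

lemma range_Bmat_eq_ker_Amat :
    LinearMap.range (Bmat ρ D).mulVecLin = LinearMap.ker (Amat ρ D).mulVecLin := by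
  ext y
  rw [LinearMap.mem_range, LinearMap.mem_ker]
  constructor
  · rintro ⟨x, rfl⟩
    rw [mulVecLin_apply, mulVecLin_apply, Amat_mulVec]
    funext i
    have h1 : ∀ w : Fin m ⊕ Fin d, (Bmat ρ D).mulVec x (ρ w) = Sum.elim x (-(D.mulVec x)) w := by
      intro w; rw [Bmat_mulVec]; simp
    simp only [Pi.add_apply, Function.comp_apply, Pi.zero_apply]
    rw [show ((Bmat ρ D).mulVec x ∘ ρ ∘ Sum.inl : Fin m → ℤ) = x from funext fun i => h1 (Sum.inl i)]
    have h2 : ((Bmat ρ D).mulVec x (ρ (Sum.inr i))) = -(D.mulVec x) i := h1 (Sum.inr i)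
    simp [h2]
  · intro hy
    refine ⟨y ∘ ρ ∘ Sum.inl, ?_⟩
    rw [mulVecLin_apply] at hy ⊢
    rw [Amat_mulVec] at hy
    funext j
    rw [Bmat_mulVec]
    have hker : ∀ k, D.mulVec (y ∘ ρ ∘ Sum.inl) k + y (ρ (Sum.inr k)) = 0 := by
      intro k
      have := congrFun hy k
      simpa using this
    rcases h : ρ.symm j with i | k
    · have : j = ρ (Sum.inl i) := by rw [← h]; simp
      simp [this]
    · have hj : j = ρ (Sum.inr k) := by rw [← h]; simp
      rw [Sum.elim_inr, hj]
      have := hker k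
      simp only [Pi.neg_apply]
      omega

lemma card_eq {m d n : ℕ} (ρ' : (Fin m ⊕ Fin d) ≃ Fin n) : m + d = n := by
  have := Fintype.card_congr ρ'
  simpa [Fintype.card_sum] using this


lemma minors_A_pm (c : Fin d ↪ Fin n) :
    ∃ r : Fin m ↪ Fin n,
      PMeq ((Amat ρ D).submatrix id ⇑c).det ((Bmat ρ D).submatrix ⇑r id).det := by
  classical
  set S : Finset (Fin n) := (Finset.univ.map c)ᶜ with hS
  have hScard : S.card = m := by
    rw [hS, Finset.card_compl]
    simp only [Finset.card_map, Finset.card_univ, Fintype.card_fin]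
    have := card_eq ρ; omega
  set r : Fin m ↪ Fin n := (S.orderEmbOfFin hScard).toEmbedding with hr
  have hdisj : ∀ i j, c i ≠ r j := by
    intro i j hij
    have hj : r j ∈ S := S.orderEmbOfFin_mem hScard j
    rw [← hij, hS, Finset.mem_compl] at hj
    exact hj (by simp)
  refine ⟨r, ?_⟩
  have hc' : ((Amat ρ D).submatrix id ⇑c) =
      (fromCols D 1).submatrix id ⇑(c.trans ρ.symm.toEmbedding) := rfl
  have hr' : ((Bmat ρ D).submatrix ⇑r id) =
      (fromRows 1 (-D)).submatrix ⇑(r.trans ρ.symm.toEmbedding) id := rfl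
  rw [hc', hr']
  exact core_pm D _ _ (fun i j h => hdisj i j (by
    have := congrArg ρ h
    simpa using this))

lemma minors_B_pm (r : Fin m ↪ Fin n) :
    ∃ c : Fin d ↪ Fin n,
      PMeq ((Amat ρ D).submatrix id ⇑c).det ((Bmat ρ D).submatrix ⇑r id).det := by
  classical
  set S : Finset (Fin n) := (Finset.univ.map r)ᶜ with hS
  have hScard : S.card = d := by
    rw [hS, Finset.card_compl]
    simp only [Finset.card_map, Finset.card_univ, Fintype.card_fin]
    have := card_eq ρ; omega
  set c : Fin d ↪ Fin n := (S.orderEmbOfFin hScard).toEmbedding with hc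
  have hdisj : ∀ i j, c i ≠ r j := by
    intro i j hij
    have hi : c i ∈ S := S.orderEmbOfFin_mem hScard i
    rw [hij, hS, Finset.mem_compl] at hi
    exact hi (by simp)
  refine ⟨c, ?_⟩
  have hc' : ((Amat ρ D).submatrix id ⇑c) =
      (fromCols D 1).submatrix id ⇑(c.trans ρ.symm.toEmbedding) := rfl
  have hr' : ((Bmat ρ D).submatrix ⇑r id) =
      (fromRows 1 (-D)).submatrix ⇑(r.trans ρ.symm.toEmbedding) id := rfl
  rw [hc', hr']
  exact core_pm D _ _ (fun i j h => hdisj i j (by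
    have := congrArg ρ h
    simpa using this))

end LawrenceAux

namespace LawrenceAux
open Matrix

lemma exists_equiv_inl {k n : ℕ} (r₀ : Fin k ↪ Fin n) :
    ∃ ρ : (Fin k ⊕ Fin (n - k)) ≃ Fin n, ∀ i, ρ (Sum.inl i) = r₀ i := by
  classical
  have hk : k ≤ n := by simpa using Fintype.card_le_of_embedding r₀
  set S : Finset (Fin n) := (Finset.univ.map r₀)ᶜ with hS
  have hScard : S.card = n - k := by
    rw [hS, Finset.card_compl]; simp
  set w := S.orderEmbOfFin hScard with hw
  set f : Fin k ⊕ Fin (n - k) → Fin n := Sum.elim ⇑r₀ ⇑w with hf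
  have hinj : Function.Injective f := by
    rintro (x | x) (y | y) hxy <;> simp only [hf, Sum.elim_inl, Sum.elim_inr] at hxy
    · exact congrArg Sum.inl (r₀.injective hxy)
    · exfalso
      have hy : w y ∈ S := S.orderEmbOfFin_mem hScard y
      rw [← hxy, hS, Finset.mem_compl] at hy
      exact hy (by simp)
    · exfalso
      have hy : w x ∈ S := S.orderEmbOfFin_mem hScard x
      rw [hxy, hS, Finset.mem_compl] at hy
      exact hy (by simp)
    · exact congrArg Sum.inr (w.injective hxy)
  have hbij : Function.Bijective f :=
    (Fintype.bijective_iff_injective_and_card f).2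
      ⟨hinj, by simp only [Fintype.card_sum, Fintype.card_fin]; omega⟩
  exact ⟨Equiv.ofBijective f hbij, fun i => rfl⟩

lemma exists_equiv_inr {k n : ℕ} (c₀ : Fin k ↪ Fin n) :
    ∃ ρ : (Fin (n - k) ⊕ Fin k) ≃ Fin n, ∀ i, ρ (Sum.inr i) = c₀ i := by
  classical
  have hk : k ≤ n := by simpa using Fintype.card_le_of_embedding c₀
  set S : Finset (Fin n) := (Finset.univ.map c₀)ᶜ with hS
  have hScard : S.card = n - k := by
    rw [hS, Finset.card_compl]; simp
  set w := S.orderEmbOfFin hScard with hw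
  set f : Fin (n - k) ⊕ Fin k → Fin n := Sum.elim ⇑w ⇑c₀ with hf
  have hinj : Function.Injective f := by
    rintro (x | x) (y | y) hxy <;> simp only [hf, Sum.elim_inl, Sum.elim_inr] at hxy
    · exact congrArg Sum.inl (w.injective hxy)
    · exfalso
      have hy : w x ∈ S := S.orderEmbOfFin_mem hScard x
      rw [hxy, hS, Finset.mem_compl] at hy
      exact hy (by simp)
    · exfalso
      have hy : w y ∈ S := S.orderEmbOfFin_mem hScard y
      rw [← hxy, hS, Finset.mem_compl] at hy
      exact hy (by simp)
    · exact congrArg Sum.inr (c₀.injective hxy)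
  have hbij : Function.Bijective f :=
    (Fintype.bijective_iff_injective_and_card f).2
      ⟨hinj, by simp only [Fintype.card_sum, Fintype.card_fin]; omega⟩
  exact ⟨Equiv.ofBijective f hbij, fun i => rfl⟩

lemma rows_li_rat {k n : ℕ} (M : Matrix (Fin k) (Fin n) ℤ) (h : LinearIndependent ℤ M) :
    LinearIndependent ℚ (M.map ((↑) : ℤ → ℚ)) := by
  classical
  set φ : (Fin n → ℤ) →ₗ[ℤ] (Fin n → ℚ) :=
    LinearMap.pi (fun j => ((Int.castAddHom ℚ).toIntLinearMap).comp (LinearMap.proj j)) with hφ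
  have hker : LinearMap.ker φ = ⊥ := by
    rw [LinearMap.ker_eq_bot]
    intro x y hxy
    funext j
    have := congrFun hxy j
    simpa [hφ, LinearMap.pi_apply] using this
  have h1 : LinearIndependent ℤ (φ ∘ M) := h.map' φ hker
  have h2 : (M.map ((↑) : ℤ → ℚ)) = φ ∘ M := rfl
  rw [h2, ← LinearIndependent.iff_fractionRing ℤ ℚ]
  exact h1

lemma exists_minor_ne_zero {k n : ℕ} (M : Matrix (Fin k) (Fin n) ℤ)
    (h : LinearIndependent ℤ M) :
    ∃ c : Fin k ↪ Fin n, (M.submatrix id ⇑c).det ≠ 0 := by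
  classical
  set Mq : Matrix (Fin k) (Fin n) ℚ := M.map ((↑) : ℤ → ℚ) with hMq
  have hli : LinearIndependent ℚ Mq := rows_li_rat M h
  -- rank computations
  have hrkT : Mq.transpose.rank = k := by
    rw [rank_eq_finrank_span_cols, col_transpose]
    have hh := finrank_span_eq_card hli
    simp only [Fintype.card_fin] at hh
    exact hh
  have hrk : Module.finrank ℚ (Submodule.span ℚ (Set.range Mq.transpose)) = k := by
    have h1 : Mq.rank = Module.finrank ℚ (Submodule.span ℚ (Set.range Mq.transpose)) :=
      rank_eq_finrank_span_cols (R := ℚ) Mq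
    have h2 : Mq.rank = k := by rw [← rank_transpose]; exact hrkT
    rw [← h1, h2]
  obtain ⟨s, hsub, hspan, hLIs⟩ := exists_linearIndependent ℚ (Set.range Mq.transpose)
  have hfin : s.Finite := (Set.finite_range _).subset hsub
  haveI := hfin.fintype
  have hcard : Fintype.card ↥s = k := by
    have := finrank_span_set_eq_card (s := s) hLIs
    rw [hspan, hrk] at this
    rw [← Set.toFinset_card]
    exact this.symm
  set eqv : Fin k ≃ ↥s := (Fintype.equivFinOfCardEq hcard).symm with heqv
  have hex : ∀ v : ↥s, ∃ j : Fin n, Mq.transpose j = ↑v := fun v => hsub v.2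
  choose g hg using hex
  set c0 : Fin k → Fin n := fun i => g (eqv i) with hc0
  have hcinj : Function.Injective c0 := by
    intro i j hij
    apply eqv.injective
    apply Subtype.ext
    rw [← hg (eqv i), ← hg (eqv j)]
    exact congrArg _ hij
  have hcols : (fun i => Mq.transpose (c0 i)) = (Subtype.val ∘ eqv) := by
    funext i; exact hg (eqv i)
  have hLIcols : LinearIndependent ℚ (fun i => Mq.transpose (c0 i)) := by
    rw [hcols]
    exact hLIs.comp ⇑eqv eqv.injective
  set N : Matrix (Fin k) (Fin k) ℚ := Mq.submatrix id c0 with hN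
  have hNcols : LinearIndependent ℚ (fun i => N.transpose i) := by
    have : (fun i => N.transpose i) = (fun i => Mq.transpose (c0 i)) := by
      funext i; funext j; rfl
    rw [this]; exact hLIcols
  have hNdet : N.det ≠ 0 := by
    have := (linearIndependent_cols_iff_isUnit (K := ℚ)).1 hNcols
    exact ((isUnit_iff_isUnit_det N).1 this).ne_zero
  have hd : N.det = (((M.submatrix id c0).det : ℤ) : ℚ) := by
    rw [show N = (Int.castRingHom ℚ).mapMatrix (M.submatrix id c0) from rfl,
      ← RingHom.map_det]
    rfl
  refine ⟨⟨c0, hcinj⟩, ?_⟩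
  intro h0
  apply hNdet
  rw [hd]
  exact_mod_cast h0

end LawrenceAux

namespace LawrenceAux
open Matrix

lemma mulVec_cast {a b : ℕ} (M : Matrix (Fin a) (Fin b) ℤ) (x : Fin b → ℤ) (i : Fin a) :
    ((M.mulVec x i : ℤ) : ℚ) = (M.map ((↑) : ℤ → ℚ)).mulVec (fun j => ((x j : ℤ) : ℚ)) i := by
  simp only [mulVec, dotProduct, map_apply]
  push_cast
  rfl

lemma dir_de {n m : ℕ} (B₀ : Matrix (Fin n) (Fin m) ℤ)
    (hli : LinearIndependent ℤ B₀.transpose)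
    (hmin : ∀ r : Fin m ↪ Fin n, (B₀.submatrix ⇑r id).det ∈ ({0, 1, -1} : Set ℤ)) :
    ∃ (d : ℕ) (A : Matrix (Fin d) (Fin n) ℤ),
      LinearIndependent ℤ A ∧
      (∃ m' : ℤ, ∀ c : Fin d ↪ Fin n, (A.submatrix id ⇑c).det ∈ ({0, m', -m'} : Set ℤ)) ∧
      LinearMap.range B₀.mulVecLin = LinearMap.ker A.mulVecLin := by
  classical
  obtain ⟨r₀, hr₀⟩ := exists_minor_ne_zero B₀.transpose hli
  have hdetT : (B₀.transpose.submatrix id ⇑r₀).det = (B₀.submatrix ⇑r₀ id).det := by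
    rw [← det_transpose (B₀.submatrix ⇑r₀ id), transpose_submatrix]
  set B₁ : Matrix (Fin m) (Fin m) ℤ := B₀.submatrix ⇑r₀ id with hB₁
  have hdetB₁ : B₁.det ≠ 0 := by rw [hB₁, ← hdetT]; exact hr₀
  have hB₁pm : B₁.det = 1 ∨ B₁.det = -1 := by
    have := hmin r₀
    simp only [Set.mem_insert_iff, Set.mem_singleton_iff] at this
    rcases this with h | h | h
    · exact absurd h hdetB₁
    · exact Or.inl h
    · exact Or.inr h
  have hunit : IsUnit B₁.det := by
    rcases hB₁pm with h | h <;> rw [h] <;> [exact isUnit_one; exact IsUnit.neg isUnit_one]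
  obtain ⟨ρ, hρ⟩ := exists_equiv_inl r₀
  set B' : Matrix (Fin n) (Fin m) ℤ := B₀ * B₁⁻¹ with hB'
  have hB'top : ∀ i j, B' (r₀ i) j = (1 : Matrix (Fin m) (Fin m) ℤ) i j := by
    intro i j
    have h1 : B' (r₀ i) j = (B₁ * B₁⁻¹) i j := by
      simp only [hB', mul_apply, hB₁, submatrix_apply, id_eq]
    rw [h1, Matrix.mul_nonsing_inv B₁ hunit]
  set D : Matrix (Fin (n - m)) (Fin m) ℤ := -(B'.submatrix (⇑ρ ∘ Sum.inr) id) with hD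
  have hBeq : Bmat ρ D = B' := by
    ext i j
    obtain ⟨w, rfl⟩ := ρ.surjective i
    cases w with
    | inl i' =>
      have h1 : Bmat ρ D (ρ (Sum.inl i')) j = (1 : Matrix (Fin m) (Fin m) ℤ) i' j := by
        simp [Bmat, submatrix_apply, fromRows_apply_inl]
      rw [h1, hρ i', hB'top]
    | inr k =>
      have h1 : Bmat ρ D (ρ (Sum.inr k)) j = (-D) k j := by
        simp [Bmat, submatrix_apply, fromRows_apply_inr]
      rw [h1, hD]
      simp [submatrix_apply]
  have hsurj : Function.Surjective (B₁⁻¹).mulVecLin := by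
    intro y
    refine ⟨B₁.mulVec y, ?_⟩
    rw [mulVecLin_apply, mulVec_mulVec, Matrix.nonsing_inv_mul B₁ hunit, one_mulVec]
  have hrange : LinearMap.range (Bmat ρ D).mulVecLin = LinearMap.range B₀.mulVecLin := by
    rw [hBeq, hB', mulVecLin_mul]
    exact LinearMap.range_comp_of_range_eq_top B₀.mulVecLin (LinearMap.range_eq_top.2 hsurj)
  have hdetB₁inv : B₁⁻¹.det = 1 ∨ B₁⁻¹.det = -1 := by
    have h1 : B₁.det * B₁⁻¹.det = 1 := by
      rw [← det_mul, Matrix.mul_nonsing_inv B₁ hunit, det_one]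
    rcases hB₁pm with h | h <;> rw [h] at h1 <;> [left; right] <;> omega
  have hminB : ∀ r : Fin m ↪ Fin n,
      ((Bmat ρ D).submatrix ⇑r id).det ∈ ({0, 1, -1} : Set ℤ) := by
    intro r
    have hfac : (Bmat ρ D).submatrix ⇑r id = (B₀.submatrix ⇑r id) * B₁⁻¹ := by
      rw [hBeq, hB']
      ext i j
      simp [mul_apply, submatrix_apply]
    rw [hfac, det_mul]
    have := hmin r
    simp only [Set.mem_insert_iff, Set.mem_singleton_iff] at this ⊢
    rcases this with h | h | h <;> rcases hdetB₁inv with h' | h' <;> simp [h, h']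
  refine ⟨n - m, Amat ρ D, Amat_rows_li ρ D, ⟨1, ?_⟩, ?_⟩
  · intro c
    obtain ⟨r, hpm⟩ := minors_A_pm ρ D c
    exact hpm.mem_symm_set (hminB r)
  · rw [← hrange, range_Bmat_eq_ker_Amat]

lemma dir_ed {n d : ℕ} (A₀ : Matrix (Fin d) (Fin n) ℤ)
    (hli : LinearIndependent ℤ A₀) (m₀ : ℤ)
    (hmin : ∀ c : Fin d ↪ Fin n, (A₀.submatrix id ⇑c).det ∈ ({0, m₀, -m₀} : Set ℤ)) :
    ∃ (m' : ℕ) (B : Matrix (Fin n) (Fin m') ℤ),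
      LinearIndependent ℤ B.transpose ∧
      (∀ r : Fin m' ↪ Fin n, (B.submatrix ⇑r id).det ∈ ({0, 1, -1} : Set ℤ)) ∧
      LinearMap.ker A₀.mulVecLin = LinearMap.range B.mulVecLin := by
  classical
  obtain ⟨c₀, hc₀⟩ := exists_minor_ne_zero A₀ hli
  obtain ⟨ρ, hρ⟩ := exists_equiv_inr c₀
  set Aq : Matrix (Fin d) (Fin n) ℚ := A₀.map ((↑) : ℤ → ℚ) with hAqdef
  set A₁q : Matrix (Fin d) (Fin d) ℚ := Aq.submatrix id ⇑c₀ with hA₁q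
  have hA₁cast : A₁q.det = (((A₀.submatrix id ⇑c₀).det : ℤ) : ℚ) := by
    rw [show A₁q = (Int.castRingHom ℚ).mapMatrix (A₀.submatrix id ⇑c₀) from rfl,
      ← RingHom.map_det]
    rfl
  have hA₁ne : A₁q.det ≠ 0 := by
    rw [hA₁cast]
    exact_mod_cast hc₀
  have hA₁unit : IsUnit A₁q.det := isUnit_iff_ne_zero.2 hA₁ne
  set A'q : Matrix (Fin d) (Fin n) ℚ := A₁q⁻¹ * Aq with hA'q
  have hA'c₀ : ∀ i x, A'q i (c₀ x) = (1 : Matrix (Fin d) (Fin d) ℚ) i x := by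
    intro i x
    have h1 : A'q i (c₀ x) = (A₁q⁻¹ * A₁q) i x := by
      simp only [hA'q, mul_apply, hA₁q, submatrix_apply, id_eq]
    rw [h1, Matrix.nonsing_inv_mul _ hA₁unit]
  have hm₀pm : (A₀.submatrix id ⇑c₀).det = m₀ ∨ (A₀.submatrix id ⇑c₀).det = -m₀ := by
    have := hmin c₀
    simp only [Set.mem_insert_iff, Set.mem_singleton_iff] at this
    rcases this with h | h | h
    · exact absurd h hc₀
    · exact Or.inl h
    · exact Or.inr h
  have hminq : ∀ c : Fin d ↪ Fin n, (A'q.submatrix id ⇑c).det ∈ ({0, 1, -1} : Set ℚ) := by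
    intro c
    have hfac : A'q.submatrix id ⇑c = A₁q⁻¹ * (Aq.submatrix id ⇑c) := by
      ext i j
      simp [hA'q, mul_apply, submatrix_apply]
    have hcast : (Aq.submatrix id ⇑c).det = (((A₀.submatrix id ⇑c).det : ℤ) : ℚ) := by
      rw [show Aq.submatrix id ⇑c = (Int.castRingHom ℚ).mapMatrix (A₀.submatrix id ⇑c) from rfl,
        ← RingHom.map_det]
      rfl
    rw [hfac, det_mul, det_nonsing_inv, Ring.inverse_eq_inv', hcast, hA₁cast]
    have hm0z : m₀ ≠ 0 := by
      rintro rfl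
      rcases hm₀pm with h | h <;> simp [h] at hc₀
    have hm0q : (m₀ : ℚ) ≠ 0 := by exact_mod_cast hm0z
    have := hmin c
    simp only [Set.mem_insert_iff, Set.mem_singleton_iff] at this ⊢
    rcases this with h | h | h <;> rcases hm₀pm with h' | h' <;> rw [h, h'] <;>
      push_cast <;> simp [inv_neg, inv_mul_cancel₀ hm0q, mul_neg, neg_neg, neg_mul]
  -- entries of A'q on the non-pivot columns lie in {0,1,-1}
  have hent : ∀ (i : Fin d) (j : Fin (n - d)), A'q i (ρ (Sum.inl j)) ∈ ({0, 1, -1} : Set ℚ) := by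
    intro i j
    set c' : Fin d → Fin n := fun x => if x = i then ρ (Sum.inl j) else c₀ x with hc'
    have hc'inj : Function.Injective c' := by
      intro x y hxy
      simp only [hc'] at hxy
      by_cases hx : x = i <;> by_cases hy : y = i
      · rw [hx, hy]
      · rw [if_pos hx, if_neg hy] at hxy
        exfalso
        rw [← hρ y] at hxy
        have := ρ.injective hxy
        simp at this
      · rw [if_neg hx, if_pos hy] at hxy
        exfalso
        rw [← hρ x] at hxy
        have := ρ.injective hxy.symm
        simp at this
      · rw [if_neg hx, if_neg hy] at hxy
        exact c₀.injective hxy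
    have hupdate : A'q.submatrix id c' =
        (1 : Matrix (Fin d) (Fin d) ℚ).updateCol i (fun k => A'q k (ρ (Sum.inl j))) := by
      ext k x
      by_cases hx : x = i
      · subst hx
        simp [hc', updateCol_apply, submatrix_apply]
      · simp only [submatrix_apply, id_eq, hc', if_neg hx, updateCol_apply, if_neg hx]
        exact hA'c₀ k x
    have hdet : (A'q.submatrix id c').det = A'q i (ρ (Sum.inl j)) := by
      rw [hupdate, ← cramer_apply, cramer_one]
      rfl
    have := hminq ⟨c', hc'inj⟩
    rw [show ⇑(⟨c', hc'inj⟩ : Fin d ↪ Fin n) = c' from rfl] at this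
    rw [← hdet]
    exact this
  -- integral matrix D
  set D : Matrix (Fin d) (Fin (n - d)) ℤ := fun i j =>
    if A'q i (ρ (Sum.inl j)) = 1 then 1 else if A'q i (ρ (Sum.inl j)) = -1 then -1 else 0
    with hDdef
  have hDcast : ∀ i j, ((D i j : ℤ) : ℚ) = A'q i (ρ (Sum.inl j)) := by
    intro i j
    have := hent i j
    simp only [Set.mem_insert_iff, Set.mem_singleton_iff] at this
    rcases this with h | h | h <;> rw [hDdef] <;> simp only [h] <;> norm_num
  have hAcast : (Amat ρ D).map ((↑) : ℤ → ℚ) = A'q := by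
    ext i x
    obtain ⟨w, rfl⟩ := ρ.surjective x
    cases w with
    | inl j =>
      have h1 : (Amat ρ D) i (ρ (Sum.inl j)) = D i j := by
        simp [Amat, submatrix_apply, fromCols]
      simp only [map_apply, h1]
      exact hDcast i j
    | inr k =>
      have h1 : (Amat ρ D) i (ρ (Sum.inr k)) = (1 : Matrix (Fin d) (Fin d) ℤ) i k := by
        simp [Amat, submatrix_apply, fromCols]
      have h2 : A'q i (ρ (Sum.inr k)) = (1 : Matrix (Fin d) (Fin d) ℚ) i k := by
        rw [hρ k]
        exact hA'c₀ i k
      rw [map_apply, h1, h2]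
      by_cases hik : i = k <;> simp [one_apply, hik]
  have hker : LinearMap.ker A₀.mulVecLin = LinearMap.ker (Amat ρ D).mulVecLin := by
    ext x
    rw [LinearMap.mem_ker, LinearMap.mem_ker, mulVecLin_apply, mulVecLin_apply]
    have hAq0 : A₀.mulVec x = 0 ↔ Aq.mulVec (fun j => ((x j : ℤ) : ℚ)) = 0 := by
      constructor
      · intro h
        funext i
        rw [← mulVec_cast, congrFun h i]
        simp
      · intro h
        funext i
        have := congrFun h i
        rw [← mulVec_cast] at this
        simp only [Pi.zero_apply] at this ⊢
        exact_mod_cast this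
    have hA'q0 : Aq.mulVec (fun j => ((x j : ℤ) : ℚ)) = 0 ↔
        A'q.mulVec (fun j => ((x j : ℤ) : ℚ)) = 0 := by
      constructor
      · intro h
        rw [hA'q, ← mulVec_mulVec, h, mulVec_zero]
      · intro h
        have hAsplit : Aq = A₁q * A'q := by
          rw [hA'q, ← Matrix.mul_assoc, Matrix.mul_nonsing_inv _ hA₁unit, Matrix.one_mul]
        rw [hAsplit, ← mulVec_mulVec, h, mulVec_zero]
    have hAq0' : (Amat ρ D).mulVec x = 0 ↔
        A'q.mulVec (fun j => ((x j : ℤ) : ℚ)) = 0 := by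
      rw [← hAcast]
      constructor
      · intro h
        funext i
        rw [← mulVec_cast, congrFun h i]
        simp
      · intro h
        funext i
        have := congrFun h i
        rw [← mulVec_cast] at this
        simp only [Pi.zero_apply] at this ⊢
        exact_mod_cast this
    rw [hAq0, hA'q0, ← hAq0']
  have hminB : ∀ r : Fin (n - d) ↪ Fin n,
      ((Bmat ρ D).submatrix ⇑r id).det ∈ ({0, 1, -1} : Set ℤ) := by
    intro r
    obtain ⟨c, hpm⟩ := minors_B_pm ρ D r
    have hAdet : ((Amat ρ D).submatrix id ⇑c).det ∈ ({0, 1, -1} : Set ℤ) := by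
      have hcast : ((((Amat ρ D).submatrix id ⇑c).det : ℤ) : ℚ) =
          (A'q.submatrix id ⇑c).det := by
        rw [← hAcast,
          show ((Amat ρ D).map ((↑) : ℤ → ℚ)).submatrix id ⇑c =
            (Int.castRingHom ℚ).mapMatrix ((Amat ρ D).submatrix id ⇑c) from rfl,
          ← RingHom.map_det]
        rfl
      have := hminq c
      rw [← hcast] at this
      simp only [Set.mem_insert_iff, Set.mem_singleton_iff] at this ⊢
      rcases this with h | h | h
      · left; exact_mod_cast h
      · right; left; exact_mod_cast h
      · right; right; exact_mod_cast h
    exact (hpm.symm.mem_symm_set hAdet : _)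
  exact ⟨n - d, Bmat ρ D, Bmat_cols_li ρ D, hminB,
    by rw [hker, ← range_Bmat_eq_ker_Amat]⟩

end LawrenceAux

/-- For a subgroup (lattice) `L ⊆ ℤ^n`, condition (d) — `L` is the image of an
integer `n × m` matrix `B` with linearly independent columns all of whose maximal (`m × m`)
minors lie in `{0, 1, -1}` — is equivalent to condition (e) — `L` is the kernel of an integer
`d × n` matrix `A` with linearly independent rows such that all maximal (`d × d`) minors of `A`
lie in `{0, m, -m}` for some integer `m`. -/
theorem lawrence_unimodular_image_iff_kernel {n : ℕ} (L : Submodule ℤ (Fin n → ℤ)) :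
    (∃ (m : ℕ) (B : Matrix (Fin n) (Fin m) ℤ),
      LinearIndependent ℤ B.transpose ∧
      (∀ r : Fin m ↪ Fin n, (B.submatrix r id).det ∈ ({0, 1, -1} : Set ℤ)) ∧
      L = LinearMap.range B.mulVecLin) ↔
    (∃ (d : ℕ) (A : Matrix (Fin d) (Fin n) ℤ),
      LinearIndependent ℤ A ∧
      (∃ m : ℤ, ∀ c : Fin d ↪ Fin n, (A.submatrix id c).det ∈ ({0, m, -m} : Set ℤ)) ∧
      L = LinearMap.ker A.mulVecLin) := by
  constructor
  · rintro ⟨m, B, hli, hmin, rfl⟩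
    obtain ⟨d, A, h1, h2, h3⟩ := LawrenceAux.dir_de B hli hmin
    exact ⟨d, A, h1, h2, h3⟩
  · rintro ⟨d, A, hli, ⟨m₀, hmin⟩, rfl⟩
    obtain ⟨m', B, h1, h2, h3⟩ := LawrenceAux.dir_ed A hli m₀ hmin
    exact ⟨m', B, h1, h2, h3⟩
end

section
/- A subgroup L of ℤ^n is unimodular if and only if every Graver element v of L satisfies v ∈ {−1, 0, 1}^n, i.e., every coordinate of every Graver element is −1, 0 or 1. -/
/-- A sublattice `L ⊆ ℤ^ι` is *unimodular* if it is the image of an injective linear map given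
by an integer matrix `B` with linearly independent columns, all of whose maximal minors lie in
`{0, 1, -1}`. -/
def IsUnimodular {ι : Type*} [Fintype ι] (L : Submodule ℤ (ι → ℤ)) : Prop :=
  ∃ (m : ℕ) (B : Matrix ι (Fin m) ℤ),
    LinearIndependent ℤ B.transpose ∧
    (∀ r : Fin m ↪ ι, (B.submatrix r id).det ∈ ({0, 1, -1} : Set ℤ)) ∧
    L = LinearMap.range B.mulVecLin

/-- `v` is a Graver element of `L`: `v` is a nonzero element of `L` such that the only nonzero
`w ∈ L` with `w⁺ ≤ v⁺` and `w⁻ ≤ v⁻` coordinatewise is `w = v`. -/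
def IsGraver {n : ℕ} (L : Submodule ℤ (Fin n → ℤ)) (v : Fin n → ℤ) : Prop :=
  v ∈ L ∧ v ≠ 0 ∧ ∀ w ∈ L, w ≠ 0 →
    (∀ i, (w i).toNat ≤ (v i).toNat) → (∀ i, (-w i).toNat ≤ (-v i).toNat) → w = v

open Matrix Module

namespace GraverProof

variable {n m : ℕ}

/-- conformal order -/
def Conf (w v : Fin n → ℤ) : Prop :=
  (∀ i, (w i).toNat ≤ (v i).toNat) ∧ (∀ i, (-w i).toNat ≤ (-v i).toNat)

lemma Conf.refl (v : Fin n → ℤ) : Conf v v := ⟨fun _ => le_rfl, fun _ => le_rfl⟩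

lemma Conf.trans {g w v : Fin n → ℤ} (h1 : Conf g w) (h2 : Conf w v) : Conf g v :=
  ⟨fun i => (h1.1 i).trans (h2.1 i), fun i => (h1.2 i).trans (h2.2 i)⟩

lemma Conf.sub {w v : Fin n → ℤ} (h : Conf w v) : Conf (v - w) v := by
  refine ⟨fun i => ?_, fun i => ?_⟩ <;>
  · have h1 := h.1 i; have h2 := h.2 i; simp only [Pi.sub_apply]; omega

def nrm (v : Fin n → ℤ) : ℕ := ∑ i, (v i).natAbs

lemma nrm_lt_of_conf_ne {w v : Fin n → ℤ} (h : Conf w v) (hne : w ≠ v) : nrm w < nrm v := by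
  obtain ⟨i, hi⟩ := Function.ne_iff.1 hne
  refine Finset.sum_lt_sum (fun j _ => ?_) ⟨i, Finset.mem_univ i, ?_⟩
  · have h1 := h.1 j; have h2 := h.2 j; omega
  · have h1 := h.1 i; have h2 := h.2 i; omega

lemma nrm_sub_lt_of_conf_ne_zero {w v : Fin n → ℤ} (h : Conf w v) (hw : w ≠ 0) :
    nrm (v - w) < nrm v := by
  obtain ⟨i, hi⟩ := Function.ne_iff.1 hw
  refine Finset.sum_lt_sum (fun j _ => ?_) ⟨i, Finset.mem_univ i, ?_⟩
  · have h1 := h.1 j; have h2 := h.2 j; simp only [Pi.sub_apply]; omega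
  · have h1 := h.1 i; have h2 := h.2 i
    simp only [Pi.sub_apply, Pi.zero_apply] at *; omega

/-- Every element of `L` is a conformal sum of Graver elements. -/
lemma exists_decomp (L : Submodule ℤ (Fin n → ℤ)) :
    ∀ N : ℕ, ∀ v ∈ L, nrm v ≤ N → ∃ (k : ℕ) (g : Fin k → Fin n → ℤ),
      (∀ j, IsGraver L (g j)) ∧ (∀ j, Conf (g j) v) ∧ ∑ j, g j = v := by
  intro N
  induction N with
  | zero =>
    intro v hv hN
    have hv0 : v = 0 := by
      funext i
      have h0 : (v i).natAbs = 0 :=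
        Finset.sum_eq_zero_iff.1 (Nat.le_zero.1 hN) i (Finset.mem_univ i)
      simpa using Int.natAbs_eq_zero.1 h0
    exact ⟨0, fun _ => 0, fun j => j.elim0, fun j => j.elim0, by simp [hv0]⟩
  | succ N ih =>
    intro v hv hN
    by_cases hv0 : v = 0
    · exact ⟨0, fun _ => 0, fun j => j.elim0, fun j => j.elim0, by simp [hv0]⟩
    by_cases hg : IsGraver L v
    · exact ⟨1, fun _ => v, fun _ => hg, fun _ => Conf.refl v, by simp⟩
    · have : ∃ w, w ∈ L ∧ w ≠ 0 ∧ Conf w v ∧ w ≠ v := by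
        by_contra hcon
        push_neg at hcon
        exact hg ⟨hv, hv0, fun w hw hw0 h1 h2 => hcon w hw hw0 ⟨h1, h2⟩⟩
      obtain ⟨w, hwL, hw0, hconf, hwne⟩ := this
      have hw_lt : nrm w < nrm v := nrm_lt_of_conf_ne hconf hwne
      have hvw_lt : nrm (v - w) < nrm v := nrm_sub_lt_of_conf_ne_zero hconf hw0
      obtain ⟨k1, g1, hG1, hC1, hS1⟩ := ih w hwL (by omega)
      obtain ⟨k2, g2, hG2, hC2, hS2⟩ := ih (v - w) (L.sub_mem hv hwL) (by omega)
      refine ⟨k1 + k2, Fin.append g1 g2, ?_, ?_, ?_⟩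
      · intro j
        refine Fin.addCases (fun j1 => ?_) (fun j2 => ?_) j
        · rw [Fin.append_left]; exact hG1 j1
        · rw [Fin.append_right]; exact hG2 j2
      · intro j
        refine Fin.addCases (fun j1 => ?_) (fun j2 => ?_) j
        · rw [Fin.append_left]; exact (hC1 j1).trans hconf
        · rw [Fin.append_right]; exact (hC2 j2).trans hconf.sub
      · rw [Fin.sum_univ_add]
        simp only [Fin.append_left, Fin.append_right]
        rw [hS1, hS2]; abel


lemma exists_basis_matrix (L : Submodule ℤ (Fin n → ℤ)) :
    ∃ (m : ℕ) (B : Matrix (Fin n) (Fin m) ℤ),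
      LinearIndependent ℤ B.transpose ∧ L = LinearMap.range B.mulVecLin := by
  obtain ⟨m, b⟩ := Submodule.basisOfPid (Pi.basisFun ℤ (Fin n)) L
  refine ⟨m, Matrix.of (fun i j => (b j : Fin n → ℤ) i), ?_, ?_⟩
  · have : (Matrix.of (fun i j => (b j : Fin n → ℤ) i)).transpose = L.subtype ∘ b := by
      funext j i; rfl
    rw [this]
    exact b.linearIndependent.map' L.subtype L.ker_subtype
  · rw [Matrix.range_mulVecLin]
    have : Set.range (Matrix.of (fun i j => (b j : Fin n → ℤ) i)).col
        = L.subtype '' (Set.range b) := by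
      rw [← Set.range_comp]; rfl
    rw [this, ← Submodule.map_span, b.span_eq, Submodule.map_top, Submodule.range_subtype]

lemma submatrix_mulVec {m : ℕ} (B : Matrix (Fin n) (Fin m) ℤ) (r : Fin m → Fin n)
    (y : Fin m → ℤ) (k : Fin m) : (B.submatrix r id).mulVec y k = B.mulVec y (r k) := rfl

lemma minor_pm_one {m : ℕ} (L : Submodule ℤ (Fin n → ℤ)) (B : Matrix (Fin n) (Fin m) ℤ)
    (hL : L = LinearMap.range B.mulVecLin)
    (HG : ∀ v, IsGraver L v → ∀ i, v i ∈ ({-1, 0, 1} : Set ℤ))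
    (r : Fin m ↪ Fin n) : (B.submatrix r id).det ∈ ({0, 1, -1} : Set ℤ) := by
  set M := B.submatrix (⇑r) id with hM
  by_cases hd : M.det = 0
  · exact Or.inl hd
  have key : ∀ i : Fin m, ∃ s : Fin m → ℤ, M.mulVec s = Pi.single i 1 := by
    intro i
    set a : ℤ := (M.det.natAbs : ℤ) with haa
    have ha : 0 < a := by
      have := Int.natAbs_pos.2 hd; rw [haa]
      omega
    have hsign : M.det.sign * M.det = a := by
      rcases lt_trichotomy M.det 0 with h | h | h
      · rw [Int.sign_eq_neg_one_of_neg h]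
        omega
      · exact absurd h hd
      · rw [Int.sign_eq_one_of_pos h]
        omega
    set y : Fin m → ℤ := M.det.sign • (M.adjugate.mulVec (Pi.single i 1)) with hy
    have hMy : M.mulVec y = a • Pi.single i 1 := by
      rw [hy, Matrix.mulVec_smul, Matrix.mulVec_mulVec, Matrix.mul_adjugate,
        Matrix.smul_mulVec, Matrix.one_mulVec, smul_smul, hsign]
    set v : Fin n → ℤ := B.mulVec y with hv
    have hvL : v ∈ L := by
      rw [hL]
      exact ⟨y, rfl⟩
    have hv_r : ∀ k : Fin m, v (r k) = if k = i then a else 0 := by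
      intro k
      have : v (r k) = M.mulVec y k := (submatrix_mulVec B r y k).symm
      rw [this, hMy]
      simp [Pi.single_apply]
    obtain ⟨k, g, hG, hC, hS⟩ := exists_decomp L (nrm v) v hvL le_rfl
    have hsum : ∑ j, g j (r i) = a := by
      have := congrFun hS (r i)
      rw [Finset.sum_apply] at this
      rw [this, hv_r i, if_pos rfl]
    have : ∃ j0, 0 < g j0 (r i) := by
      by_contra hcon
      push_neg at hcon
      have : (∑ j, g j (r i)) ≤ 0 := Finset.sum_nonpos fun j _ => hcon j
      omega
    obtain ⟨j0, hj0⟩ := this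
    have hgr : IsGraver L (g j0) := hG j0
    have hmem : ∀ i', g j0 i' ∈ ({-1, 0, 1} : Set ℤ) := HG _ hgr
    have hg1 : g j0 (r i) = 1 := by
      have := hmem (r i)
      simp only [Set.mem_insert_iff, Set.mem_singleton_iff] at this
      omega
    have hg0 : ∀ k : Fin m, k ≠ i → g j0 (r k) = 0 := by
      intro k hk
      have h1 := (hC j0).1 (r k)
      have h2 := (hC j0).2 (r k)
      rw [hv_r k, if_neg hk] at h1 h2
      omega
    obtain ⟨s, hs⟩ : g j0 ∈ LinearMap.range B.mulVecLin := hL ▸ hgr.1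
    refine ⟨s, funext fun k => ?_⟩
    rw [submatrix_mulVec]
    have hBs : B.mulVec s = g j0 := hs
    rw [hBs, Pi.single_apply]
    by_cases hk : k = i
    · rw [hk, if_pos rfl, hg1]
    · rw [if_neg hk, hg0 k hk]
  choose s hs using key
  set S : Matrix (Fin m) (Fin m) ℤ := Matrix.of fun k i => s i k with hS
  have hMS : M * S = 1 := by
    ext k i
    rw [Matrix.mul_apply, Matrix.one_apply]
    have := congrFun (hs i) k
    rw [Matrix.mulVec, dotProduct] at this
    rw [Pi.single_apply] at this
    simpa [hS] using this
  have hdet : M.det * S.det = 1 := by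
    rw [← Matrix.det_mul, hMS, Matrix.det_one]
  rcases Int.isUnit_iff.1 (IsUnit.of_mul_eq_one _ hdet) with h | h
  · exact Or.inr (Or.inl h)
  · exact Or.inr (Or.inr h)

lemma exists_orthogonal {n m : ℕ} (A : Matrix (Fin n) (Fin m) ℚ) (tight : Fin n → Prop)
    (hspan : Submodule.span ℚ ((fun i => A i) '' {i | tight i}) ≠ ⊤) :
    ∃ c : Fin m → ℚ, c ≠ 0 ∧ ∀ i, tight i → A i ⬝ᵥ c = 0 := by
  classical
  by_contra hcon
  push_neg at hcon
  set T : Matrix (Fin n) (Fin m) ℚ := Matrix.of fun i j => if tight i then A i j else 0 with hT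
  have hinj : Function.Injective T.mulVec := by
    intro c d hcd
    by_contra hne
    have h0 : c - d ≠ 0 := sub_ne_zero.2 hne
    obtain ⟨i, hi, hdot⟩ := hcon (c - d) h0
    have : T.mulVec (c - d) i = 0 := by
      rw [Matrix.mulVec_sub, hcd]; simp
    rw [Matrix.mulVec, dotProduct] at this
    apply hdot
    rw [dotProduct] at *
    have heq : ∀ j, T i j = A i j := fun j => if_pos hi
    calc ∑ j, A i j * (c - d) j = ∑ j, T i j * (c - d) j := by
          refine Finset.sum_congr rfl fun j _ => by rw [heq j]
      _ = 0 := this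
  have hker : LinearMap.ker T.mulVecLin = ⊥ := by
    rw [LinearMap.ker_eq_bot]
    exact hinj
  have hrank : T.rank = m := by
    have := LinearMap.finrank_range_add_finrank_ker T.mulVecLin
    rw [hker, finrank_bot, Module.finrank_fin_fun] at this
    simpa [Matrix.rank] using this
  have hrankT : Tᵀ.rank = m := by rw [Matrix.rank_transpose, hrank]
  have hspanrows : finrank ℚ (Submodule.span ℚ (Set.range (fun i => T i))) = m := by
    have h2 := Tᵀ.rank_eq_finrank_span_cols
    rw [hrankT] at h2
    exact h2.symm
  have hsub : Submodule.span ℚ (Set.range (fun i => T i)) ≤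
      Submodule.span ℚ ((fun i => A i) '' {i | tight i}) := by
    rw [Submodule.span_le]
    rintro x ⟨i, rfl⟩
    by_cases hi : tight i
    · apply Submodule.subset_span
      exact ⟨i, hi, by funext j; exact (if_pos hi).symm⟩
    · have h0 : T i = 0 := by funext j; exact if_neg hi
      show T i ∈ _
      rw [h0]; exact Submodule.zero_mem _
  apply hspan
  have hle := Submodule.finrank_le (Submodule.span ℚ ((fun i => A i) '' {i | tight i}))
  have hge : m ≤ finrank ℚ (Submodule.span ℚ ((fun i => A i) '' {i | tight i})) :=
    by have h3 := Submodule.finrank_mono hsub; rw [hspanrows] at h3; exact h3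
  apply Submodule.eq_top_of_finrank_eq
  rw [Module.finrank_fin_fun] at hle ⊢
  omega

def TSpan (A : Matrix (Fin n) (Fin m) ℚ) (l u : Fin n → ℚ) (t : Fin m → ℚ) :
    Submodule ℚ (Fin m → ℚ) :=
  Submodule.span ℚ ((fun i => A i) '' {i | A.mulVec t i = l i ∨ A.mulVec t i = u i})

lemma improve (A : Matrix (Fin n) (Fin m) ℚ) (hA : Function.Injective A.mulVec)
    (l u : Fin n → ℚ) (t : Fin m → ℚ)
    (ht : ∀ i, l i ≤ A.mulVec t i ∧ A.mulVec t i ≤ u i)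
    (hW : TSpan A l u t ≠ ⊤) :
    ∃ t', (∀ i, l i ≤ A.mulVec t' i ∧ A.mulVec t' i ≤ u i) ∧
      finrank ℚ (TSpan A l u t) < finrank ℚ (TSpan A l u t') := by
  classical
  obtain ⟨c, hc0, hcorth⟩ := exists_orthogonal A _ hW
  have hAc : A.mulVec c ≠ 0 := by
    intro h
    exact hc0 (hA (by rw [h, Matrix.mulVec_zero]))
  have hAci : ∃ i, A.mulVec c i ≠ 0 := Function.ne_iff.1 hAc
  set F : Finset (Fin n) := Finset.univ.filter (fun i => A.mulVec c i ≠ 0) with hF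
  have hFne : F.Nonempty := by
    obtain ⟨i, hi⟩ := hAci
    exact ⟨i, by simp [hF, hi]⟩
  set ρ : Fin n → ℚ := fun i => if 0 < A.mulVec c i then (u i - A.mulVec t i) / (A.mulVec c i)
    else (A.mulVec t i - l i) / (-(A.mulVec c i)) with hρ
  have hρi : ∀ i, ρ i = if 0 < A.mulVec c i then (u i - A.mulVec t i) / (A.mulVec c i)
      else (A.mulVec t i - l i) / (-(A.mulVec c i)) := fun i => rfl
  obtain ⟨istar, histar, hmin⟩ := F.exists_min_image ρ hFne
  have histar' : A.mulVec c istar ≠ 0 := by simpa [hF] using histar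
  set ε : ℚ := ρ istar with hε
  have hε0 : 0 ≤ ε := by
    rw [hε, hρi istar]
    by_cases hp : 0 < A.mulVec c istar
    · rw [if_pos hp]
      exact div_nonneg (by linarith [(ht istar).2]) hp.le
    · rw [if_neg hp]
      have : A.mulVec c istar < 0 := lt_of_le_of_ne (not_lt.1 hp) histar'
      exact div_nonneg (by linarith [(ht istar).1]) (by linarith)
  set t' : Fin m → ℚ := t + ε • c with ht'
  have hAt' : ∀ i, A.mulVec t' i = A.mulVec t i + ε * A.mulVec c i := by
    intro i
    rw [ht', Matrix.mulVec_add, Matrix.mulVec_smul]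
    simp [smul_eq_mul]
  have hfeas : ∀ i, l i ≤ A.mulVec t' i ∧ A.mulVec t' i ≤ u i := by
    intro i
    rcases lt_trichotomy (A.mulVec c i) 0 with hneg | hzero | hpos
    · have hiF : i ∈ F := by simp [hF, hneg.ne]
      have hle : ε ≤ ρ i := hmin i hiF
      rw [hρi i, if_neg (by linarith)] at hle
      have hden : 0 < -(A.mulVec c i) := by linarith
      have hmul : ε * (-(A.mulVec c i)) ≤ A.mulVec t i - l i := by
        calc ε * (-(A.mulVec c i)) ≤ ((A.mulVec t i - l i) / (-(A.mulVec c i))) * (-(A.mulVec c i)) := by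
              exact mul_le_mul_of_nonneg_right hle hden.le
          _ = A.mulVec t i - l i := div_mul_cancel₀ _ hden.ne'
      constructor
      · rw [hAt' i]; nlinarith
      · rw [hAt' i]
        have : ε * A.mulVec c i ≤ 0 := mul_nonpos_of_nonneg_of_nonpos hε0 hneg.le
        linarith [(ht i).2]
    · rw [hAt' i, hzero, mul_zero, add_zero]
      exact ht i
    · have hiF : i ∈ F := by simp [hF, hpos.ne']
      have hle : ε ≤ ρ i := hmin i hiF
      rw [hρi i, if_pos hpos] at hle
      have hmul : ε * A.mulVec c i ≤ u i - A.mulVec t i := by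
        calc ε * A.mulVec c i ≤ ((u i - A.mulVec t i) / A.mulVec c i) * A.mulVec c i :=
              mul_le_mul_of_nonneg_right hle hpos.le
          _ = u i - A.mulVec t i := div_mul_cancel₀ _ hpos.ne'
      constructor
      · rw [hAt' i]
        have : 0 ≤ ε * A.mulVec c i := mul_nonneg hε0 hpos.le
        linarith [(ht i).1]
      · rw [hAt' i]; linarith
  have htightpres : ∀ i, (A.mulVec t i = l i ∨ A.mulVec t i = u i) →
      A.mulVec t' i = A.mulVec t i := by
    intro i hi
    rw [hAt' i]
    have : A.mulVec c i = 0 := hcorth i hi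
    rw [this, mul_zero, add_zero]
  have htight' : A.mulVec t' istar = l istar ∨ A.mulVec t' istar = u istar := by
    rcases lt_or_gt_of_ne histar' with hneg | hpos
    · left
      rw [hAt' istar, hε, hρi istar, if_neg (by linarith)]
      rw [div_neg, neg_mul, div_mul_cancel₀ _ histar']
      ring
    · right
      rw [hAt' istar, hε, hρi istar, if_pos hpos]
      rw [div_mul_cancel₀ _ histar']
      ring
  have hle : TSpan A l u t ≤ TSpan A l u t' := by
    apply Submodule.span_mono
    apply Set.image_mono
    intro i hi
    have := htightpres i hi
    simp only [Set.mem_setOf_eq] at hi ⊢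
    rw [this]
    exact hi
  have hmemt' : A istar ∈ TSpan A l u t' :=
    Submodule.subset_span ⟨istar, htight', rfl⟩
  have hnmem : A istar ∉ TSpan A l u t := by
    intro hmem
    set φ : (Fin m → ℚ) →ₗ[ℚ] ℚ :=
      { toFun := fun x => x ⬝ᵥ c
        map_add' := fun x y => add_dotProduct x y c
        map_smul' := fun a x => smul_dotProduct a x c } with hφ
    have hker : TSpan A l u t ≤ LinearMap.ker φ := by
      rw [TSpan, Submodule.span_le]
      rintro x ⟨i, hi, rfl⟩
      simp only [SetLike.mem_coe, LinearMap.mem_ker]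
      exact hcorth i hi
    have : φ (A istar) = 0 := hker hmem
    have hne : φ (A istar) ≠ 0 := histar'
    exact hne this
  have hlt : TSpan A l u t < TSpan A l u t' :=
    lt_of_le_of_ne hle (fun h => hnmem (h ▸ hmemt'))
  exact ⟨t', hfeas, Submodule.finrank_lt_finrank_of_lt hlt⟩

lemma to_vertex (A : Matrix (Fin n) (Fin m) ℚ) (hA : Function.Injective A.mulVec)
    (l u : Fin n → ℚ) :
    ∀ (k : ℕ) (t : Fin m → ℚ), (∀ i, l i ≤ A.mulVec t i ∧ A.mulVec t i ≤ u i) →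
      m - finrank ℚ (TSpan A l u t) ≤ k →
      ∃ t', (∀ i, l i ≤ A.mulVec t' i ∧ A.mulVec t' i ≤ u i) ∧ TSpan A l u t' = ⊤ := by
  intro k
  induction k with
  | zero =>
    intro t ht hk
    refine ⟨t, ht, ?_⟩
    have h1 : finrank ℚ (TSpan A l u t) ≤ m := by
      have := Submodule.finrank_le (TSpan A l u t)
      rwa [Module.finrank_fin_fun] at this
    apply Submodule.eq_top_of_finrank_eq
    rw [Module.finrank_fin_fun]
    omega
  | succ k ih =>
    intro t ht hk
    by_cases hW : TSpan A l u t = ⊤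
    · exact ⟨t, ht, hW⟩
    · obtain ⟨t', ht', hlt⟩ := improve A hA l u t ht hW
      exact ih t' ht' (by omega)

lemma cast_mulVec (B : Matrix (Fin n) (Fin m) ℤ) (x : Fin m → ℤ) (i : Fin n) :
    (B.map ((↑) : ℤ → ℚ)).mulVec (fun j => (x j : ℚ)) i = ((B.mulVec x i : ℤ) : ℚ) := by
  simp only [Matrix.mulVec, dotProduct, Matrix.map_apply]
  push_cast
  rfl

lemma QInj (B : Matrix (Fin n) (Fin m) ℤ) (h : LinearIndependent ℤ B.transpose) :
    Function.Injective (B.map ((↑) : ℤ → ℚ)).mulVec := by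
  set A := B.map ((↑) : ℤ → ℚ) with hA
  have key : ∀ c : Fin m → ℚ, A.mulVec c = 0 → c = 0 := by
    intro c hc
    set d : ℕ := ∏ j, (c j).den with hd
    have hdpos : 0 < d := Finset.prod_pos (fun j _ => (c j).pos)
    set g : Fin m → ℤ := fun j => (c j).num * ((d / (c j).den : ℕ) : ℤ) with hg
    have hgc : ∀ j, (g j : ℚ) = (d : ℚ) * c j := by
      intro j
      have hdvd : (c j).den ∣ d := Finset.dvd_prod_of_mem _ (Finset.mem_univ j)
      obtain ⟨k, hk⟩ := hdvd
      have hden : ((c j).den : ℚ) ≠ 0 := by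
        exact_mod_cast (c j).den_ne_zero
      have hdk : (d / (c j).den : ℕ) = k := by
        rw [hk]
        exact Nat.mul_div_cancel_left k (c j).pos
      have hcj : (c j) = ((c j).num : ℚ) / ((c j).den : ℚ) := ((c j).num_div_den).symm
      have hgj : g j = (c j).num * ((d / (c j).den : ℕ) : ℤ) := rfl
      have hq : c j * ((c j).den : ℚ) = ((c j).num : ℚ) := by
        nth_rewrite 1 [hcj]
        exact div_mul_cancel₀ _ hden
      rw [hgj, hdk, hk]
      push_cast
      linear_combination (-(k : ℚ)) * hq
    have hBg : B.mulVec g = 0 := by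
      funext i
      have h1 : ((B.mulVec g i : ℤ) : ℚ) = A.mulVec (fun j => (g j : ℚ)) i :=
        (cast_mulVec B g i).symm
      have h2 : (fun j => (g j : ℚ)) = (d : ℚ) • c := by
        funext j; rw [hgc j]; rfl
      rw [h2, Matrix.mulVec_smul, hc] at h1
      simp only [Pi.smul_apply, Pi.zero_apply, smul_zero] at h1
      exact_mod_cast h1
    have hg0 : g = 0 := by
      have hli := Fintype.linearIndependent_iff.1 h
      have hsum : ∑ j, g j • B.transpose j = 0 := by
        funext i
        rw [Finset.sum_apply]
        simp only [Pi.smul_apply, Matrix.transpose_apply, smul_eq_mul]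
        have h5 := congrFun hBg i
        rw [Matrix.mulVec, dotProduct] at h5
        simp only [Pi.zero_apply] at h5 ⊢
        rw [← h5]
        exact Finset.sum_congr rfl fun j _ => mul_comm _ _
      funext j
      exact hli g hsum j
    funext j
    have := congrFun hg0 j
    rw [Pi.zero_apply] at this
    have h3 : (d : ℚ) * c j = 0 := by rw [← hgc j, this]; simp
    have hd0 : (d : ℚ) ≠ 0 := by exact_mod_cast hdpos.ne'
    rw [Pi.zero_apply]
    exact (mul_eq_zero.1 h3).resolve_left hd0
  intro x y hxy
  have h4 : A.mulVec (x - y) = 0 := by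
    rw [Matrix.mulVec_sub, hxy]
    simp
  exact sub_eq_zero.1 (key _ h4)

lemma integrality (B : Matrix (Fin n) (Fin m) ℤ)
    (hBQ : Function.Injective (B.map ((↑) : ℤ → ℚ)).mulVec)
    (hminor : ∀ r : Fin m ↪ Fin n, (B.submatrix r id).det ∈ ({0, 1, -1} : Set ℤ))
    (l u : Fin n → ℤ) (t0 : Fin m → ℚ)
    (h0 : ∀ i, (l i : ℚ) ≤ (B.map ((↑) : ℤ → ℚ)).mulVec t0 i ∧
      (B.map ((↑) : ℤ → ℚ)).mulVec t0 i ≤ (u i : ℚ)) :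
    ∃ t : Fin m → ℤ, ∀ i, l i ≤ B.mulVec t i ∧ B.mulVec t i ≤ u i := by
  classical
  set A := B.map ((↑) : ℤ → ℚ) with hA
  set lq : Fin n → ℚ := fun i => (l i : ℚ) with hlq
  set uq : Fin n → ℚ := fun i => (u i : ℚ) with huq
  obtain ⟨t, ht, htop⟩ := to_vertex A hBQ lq uq m t0 (fun i => h0 i) (Nat.sub_le _ _)
  -- extract a basis from the tight rows
  set tset : Set (Fin n) := {i | A.mulVec t i = lq i ∨ A.mulVec t i = uq i} with htset
  have hspan : Submodule.span ℚ ((fun i => A i) '' tset) = ⊤ := htop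
  obtain ⟨b, hbsub, hbspan, hbind⟩ := exists_linearIndependent ℚ ((fun i => A i) '' tset)
  rw [hspan] at hbspan
  have hbfin : b.Finite := Set.Finite.subset (Set.toFinite _) hbsub
  haveI : Fintype b := hbfin.fintype
  have hbbasis : Basis b ℚ (Fin m → ℚ) := Basis.mk hbind (by rw [Subtype.range_coe, hbspan])
  have hcard : Fintype.card b = m := by
    have := Module.finrank_eq_card_basis hbbasis
    rw [Module.finrank_fin_fun] at this
    omega
  have e : Fin m ≃ b := (Fintype.equivFinOfCardEq hcard).symm
  -- choose tight indices realizing the basis vectors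
  have hchoice : ∀ j : Fin m, ∃ i : Fin n, i ∈ tset ∧ A i = (e j : Fin m → ℚ) := by
    intro j
    obtain ⟨i, hi, hAi⟩ := hbsub (e j).2
    exact ⟨i, hi, hAi⟩
  choose r hrt hrA using hchoice
  have hrinj : Function.Injective r := by
    intro j1 j2 hj
    have : (e j1 : Fin m → ℚ) = (e j2 : Fin m → ℚ) := by rw [← hrA j1, ← hrA j2, hj]
    exact e.injective (Subtype.ext this)
  set remb : Fin m ↪ Fin n := ⟨r, hrinj⟩ with hremb
  set M : Matrix (Fin m) (Fin m) ℤ := B.submatrix r id with hMdef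
  set MQ : Matrix (Fin m) (Fin m) ℚ := A.submatrix r id with hMQdef
  have hMQrows : ∀ j, MQ j = (e j : Fin m → ℚ) := by
    intro j; funext k; rw [hMQdef]; exact congrFun (hrA j) k
  have hMQunit : IsUnit MQ := by
    rw [← Matrix.linearIndependent_rows_iff_isUnit]
    have : (fun j => MQ j) = fun j => (e j : Fin m → ℚ) := funext hMQrows
    show LinearIndependent ℚ (fun j => MQ j); rw [this]
    exact hbind.comp e e.injective
  have hMQdet : IsUnit MQ.det := (Matrix.isUnit_iff_isUnit_det MQ).1 hMQunit
  have hMcast : MQ = M.map ((↑) : ℤ → ℚ) := by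
    rw [hMQdef, hMdef, hA]
    ext j k
    simp [Matrix.submatrix, Matrix.map_apply]
  have hMdetcast : (M.det : ℚ) = MQ.det := by
    rw [hMcast]
    have := RingHom.map_det (Int.castRingHom ℚ) M
    rw [RingHom.mapMatrix_apply] at this
    rw [show ((Int.castRingHom ℚ) : ℤ → ℚ) = ((↑) : ℤ → ℚ) from rfl] at this
    exact this
  have hMdet1 : M.det = 1 ∨ M.det = -1 := by
    have hne : M.det ≠ 0 := by
      intro h
      rw [← hMdetcast] at hMQdet
      rw [h] at hMQdet
      simp at hMQdet
    rcases hminor remb with h | h | h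
    · exact absurd h hne
    · exact Or.inl h
    · exact Or.inr h
  -- integer tight values
  set cv : Fin m → ℤ := fun j => if A.mulVec t (r j) = lq (r j) then l (r j) else u (r j) with hcv
  have hcvj : ∀ j, cv j = if A.mulVec t (r j) = lq (r j) then l (r j) else u (r j) :=
    fun _ => rfl
  have htightc : ∀ j, A.mulVec t (r j) = (cv j : ℚ) := by
    intro j
    rcases hrt j with h | h
    · rw [hcvj j, if_pos h]; exact h
    · by_cases h' : A.mulVec t (r j) = lq (r j)
      · rw [hcvj j, if_pos h']; exact h'
      · rw [hcvj j, if_neg h']; exact h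
  -- the integer solution
  set s : Fin m → ℤ := M.det • (M.adjugate.mulVec cv) with hs
  have hMs : M.mulVec s = cv := by
    rw [hs, Matrix.mulVec_smul, Matrix.mulVec_mulVec, Matrix.mul_adjugate,
      Matrix.smul_mulVec, Matrix.one_mulVec, smul_smul]
    rcases hMdet1 with h | h <;> rw [h] <;> simp
  have hMQinj : Function.Injective MQ.mulVec := Matrix.mulVec_injective_iff_isUnit.2 hMQunit
  have hsub_mulVec : ∀ (x : Fin m → ℚ) (j : Fin m), MQ.mulVec x j = A.mulVec x (r j) := by
    intro x j; rfl
  have hcast_s : (fun j => ((s j : ℤ) : ℚ)) = t := by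
    apply hMQinj
    funext j
    have h1 : MQ.mulVec (fun j => ((s j : ℤ) : ℚ)) j = ((M.mulVec s j : ℤ) : ℚ) := by
      rw [hMcast]; exact cast_mulVec M s j
    rw [h1, hMs, hsub_mulVec t j, htightc j]
  refine ⟨s, fun i => ?_⟩
  have hcast : ((B.mulVec s i : ℤ) : ℚ) = A.mulVec t i := by
    rw [← hcast_s, hA]
    exact (cast_mulVec B s i).symm
  constructor
  · have h2 := (ht i).1
    rw [← hcast] at h2
    simp only [hlq] at h2
    exact_mod_cast h2
  · have h2 := (ht i).2
    rw [← hcast] at h2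
    simp only [huq] at h2
    exact_mod_cast h2

lemma forward (L : Submodule ℤ (Fin n → ℤ)) (hU : IsUnimodular L) :
    ∀ v, IsGraver L v → ∀ i, v i ∈ ({-1, 0, 1} : Set ℤ) := by
  obtain ⟨m, B, hind, hminor, hL⟩ := hU
  intro v hv i0
  by_contra hbig
  simp only [Set.mem_insert_iff, Set.mem_singleton_iff] at hbig
  push_neg at hbig
  have h2 : 2 ≤ v i0 ∨ v i0 ≤ -2 := by omega
  obtain ⟨x, hx⟩ : v ∈ LinearMap.range B.mulVecLin := hL ▸ hv.1
  have hx' : B.mulVec x = v := hx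
  set l : Fin n → ℤ := fun i => ⌊(v i : ℚ) / 2⌋ with hl
  set u : Fin n → ℤ := fun i => ⌈(v i : ℚ) / 2⌉ with hu
  have hli : ∀ i, l i = ⌊(v i : ℚ) / 2⌋ := fun _ => rfl
  have hui : ∀ i, u i = ⌈(v i : ℚ) / 2⌉ := fun _ => rfl
  set t0 : Fin m → ℚ := fun j => (x j : ℚ) / 2 with ht0
  have hfeas : ∀ i, (l i : ℚ) ≤ (B.map ((↑) : ℤ → ℚ)).mulVec t0 i ∧
      (B.map ((↑) : ℤ → ℚ)).mulVec t0 i ≤ (u i : ℚ) := by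
    intro i
    have ht0e : t0 = (1/2 : ℚ) • (fun j => (x j : ℚ)) := by
      funext j
      simp [ht0, div_eq_mul_inv, mul_comm]
    have hAv : (B.map ((↑) : ℤ → ℚ)).mulVec t0 i = (v i : ℚ) / 2 := by
      rw [ht0e, Matrix.mulVec_smul]
      have := cast_mulVec B x i
      simp only [Pi.smul_apply, this, hx']
      rw [smul_eq_mul]
      ring
    rw [hAv, hli i, hui i]
    exact ⟨Int.floor_le _, Int.le_ceil _⟩
  obtain ⟨t, htt⟩ := integrality B (QInj B hind) hminor l u t0 hfeas
  set w : Fin n → ℤ := B.mulVec t with hw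
  have hwL : w ∈ L := by
    rw [hL]
    exact ⟨t, rfl⟩
  -- sandwich facts per coordinate
  have hsand : ∀ i, (0 ≤ v i → 0 ≤ w i ∧ w i ≤ v i) ∧ (v i ≤ 0 → v i ≤ w i ∧ w i ≤ 0) := by
    intro i
    have h1 := (htt i).1
    have h2' := (htt i).2
    rw [hli i] at h1
    rw [hui i] at h2'
    constructor
    · intro hc
      have hcq : (0 : ℚ) ≤ (v i : ℚ) := by exact_mod_cast hc
      have hfl : (0 : ℤ) ≤ ⌊(v i : ℚ) / 2⌋ := Int.le_floor.2 (by push_cast; linarith)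
      have hce : ⌈(v i : ℚ) / 2⌉ ≤ v i := Int.ceil_le.2 (by push_cast; linarith)
      exact ⟨le_trans hfl h1, le_trans h2' hce⟩
    · intro hc
      have hcq : (v i : ℚ) ≤ 0 := by exact_mod_cast hc
      have hfl : v i ≤ ⌊(v i : ℚ) / 2⌋ := Int.le_floor.2 (by push_cast; linarith)
      have hce : ⌈(v i : ℚ) / 2⌉ ≤ 0 := Int.ceil_le.2 (by push_cast; linarith)
      exact ⟨le_trans hfl h1, le_trans h2' hce⟩
  have hconf1 : ∀ i, (w i).toNat ≤ (v i).toNat := by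
    intro i
    have := hsand i
    rcases le_or_gt 0 (v i) with h | h
    · have := this.1 h; omega
    · have := this.2 h.le; omega
  have hconf2 : ∀ i, (-w i).toNat ≤ (-v i).toNat := by
    intro i
    have := hsand i
    rcases le_or_gt 0 (v i) with h | h
    · have := this.1 h; omega
    · have := this.2 h.le; omega
  -- w ≠ 0 and w ≠ v at coordinate i0
  have hkey : (1 ≤ w i0 ∧ w i0 ≤ v i0 - 1) ∨ (w i0 ≤ -1 ∧ v i0 + 1 ≤ w i0) := by
    have h1 := (htt i0).1
    have h2' := (htt i0).2
    rw [hli i0] at h1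
    rw [hui i0] at h2'
    rcases h2 with hp | hn
    · left
      have hq : (2 : ℚ) ≤ (v i0 : ℚ) := by exact_mod_cast hp
      have hfl : (1 : ℤ) ≤ ⌊(v i0 : ℚ) / 2⌋ := Int.le_floor.2 (by push_cast; linarith)
      have hce : ⌈(v i0 : ℚ) / 2⌉ ≤ v i0 - 1 := Int.ceil_le.2 (by push_cast; linarith)
      omega
    · right
      have hq : (v i0 : ℚ) ≤ -2 := by exact_mod_cast hn
      have hce : ⌈(v i0 : ℚ) / 2⌉ ≤ -1 := Int.ceil_le.2 (by push_cast; linarith)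
      have hfl : v i0 + 1 ≤ ⌊(v i0 : ℚ) / 2⌋ := Int.le_floor.2 (by push_cast; linarith)
      omega
  have hw0 : w ≠ 0 := by
    intro h
    have := congrFun h i0
    simp only [Pi.zero_apply] at this
    omega
  have hwv : w ≠ v := by
    intro h
    have := congrFun h i0
    omega
  exact hwv (hv.2.2 w hwL hw0 hconf1 hconf2)

end GraverProof

/-- `L` is unimodular iff every coordinate of every Graver element of `L` is
`-1`, `0` or `1`. -/
theorem isUnimodular_iff_graver_coords {n : ℕ} (L : Submodule ℤ (Fin n → ℤ)) :
    IsUnimodular L ↔ ∀ v, IsGraver L v → ∀ i, v i ∈ ({-1, 0, 1} : Set ℤ) := by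
  constructor
  · exact GraverProof.forward L
  · intro HG
    obtain ⟨m, B, hind, hrange⟩ := GraverProof.exists_basis_matrix L
    exact ⟨m, B, hind, fun r => GraverProof.minor_pm_one L B hrange HG r, hrange⟩
end

section
/- A subgroup L of ℤ^n is unimodular if and only if for every subset T ⊆ {1,…,n}, the quotient group ℤ^T / π_T(L) is torsion free, where π_T : ℤ^n → ℤ^T denotes the projection onto the coordinates indexed by T. -/
open Matrix

lemma sat_iff' {M : Type*} [AddCommGroup M] (N : Submodule ℤ M) :
    (∀ (x : M ⧸ N) (m : ℕ), m ≠ 0 → m • x = 0 → x = 0) ↔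
    (∀ (y : M) (m : ℕ), m ≠ 0 → m • y ∈ N → y ∈ N) := by
  constructor
  · intro h y m hm hy
    have := h (Submodule.Quotient.mk y) m hm ?_
    · rwa [Submodule.Quotient.mk_eq_zero] at this
    · have : m • (Submodule.Quotient.mk y : M ⧸ N) = Submodule.Quotient.mk (m • y) :=
        (map_nsmul (N.mkQ) m y).symm
      rw [this, Submodule.Quotient.mk_eq_zero]
      exact hy
  · intro h x m hm hx
    obtain ⟨y, rfl⟩ := Submodule.Quotient.mk_surjective N x
    rw [Submodule.Quotient.mk_eq_zero]
    refine h y m hm ?_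
    have : Submodule.Quotient.mk (p := N) (m • y) = 0 := by
      simpa using hx
    rwa [Submodule.Quotient.mk_eq_zero] at this


lemma unimod_backward {n : ℕ} (L : Submodule ℤ (Fin n → ℤ))
    (H : ∀ T : Finset (Fin n),
      ∀ (y : (↥T → ℤ)) (m : ℕ), m ≠ 0 →
        m • y ∈ Submodule.map (LinearMap.funLeft ℤ ℤ (fun i : ↥T => (i : Fin n))) L →
        y ∈ Submodule.map (LinearMap.funLeft ℤ ℤ (fun i : ↥T => (i : Fin n))) L) :
    ∃ (m : ℕ) (B : Matrix (Fin n) (Fin m) ℤ),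
    LinearIndependent ℤ B.transpose ∧
    (∀ r : Fin m ↪ Fin n, (B.submatrix r id).det ∈ ({0, 1, -1} : Set ℤ)) ∧
    L = LinearMap.range B.mulVecLin := by
  obtain ⟨m, bb⟩ := Submodule.basisOfPid (Pi.basisFun ℤ (Fin n)) L
  refine ⟨m, Matrix.of (fun i j => (bb j : Fin n → ℤ) i), ?_, ?_, ?_⟩
  · have : (Matrix.of (fun i j => (bb j : Fin n → ℤ) i)).transpose
        = fun j => ((bb j : Fin n → ℤ)) := rfl
    rw [this]
    exact bb.linearIndependent.map' L.subtype (Submodule.ker_subtype L)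
  · intro r
    set B := Matrix.of (fun i j => (bb j : Fin n → ℤ) i) with hB
    set A := B.submatrix r id with hA
    by_cases hd : A.det = 0
    · exact Or.inl hd
    right
    -- T : image of r
    set T : Finset (Fin n) := Finset.univ.map r with hT
    have hmemT : ∀ j : Fin m, r j ∈ T := fun j => by simp [hT]
    set π := (LinearMap.funLeft ℤ ℤ (fun i : ↥T => (i : Fin n))) with hπ
    have hLB : ∀ v : Fin m → ℤ, B.mulVec v ∈ L := by
      intro v
      have : B.mulVec v = ∑ j, v j • (bb j : Fin n → ℤ) := by
        funext i
        simp [Matrix.mulVec, dotProduct, hB, Finset.sum_apply, mul_comm]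
      rw [this]
      exact Submodule.sum_mem L (fun j _ => Submodule.smul_mem L _ (bb j).2)
    have hBL : ∀ x ∈ L, ∃ v : Fin m → ℤ, B.mulVec v = x := by
      intro x hx
      refine ⟨bb.repr ⟨x, hx⟩, ?_⟩
      have hx' : (⟨x, hx⟩ : L) = ∑ j, bb.repr ⟨x, hx⟩ j • bb j := by
        conv_lhs => rw [← bb.sum_repr ⟨x, hx⟩]
      have := congrArg (Subtype.val) hx'
      funext i
      rw [show x i = ((∑ j, bb.repr ⟨x, hx⟩ j • bb j : L) : Fin n → ℤ) i by rw [← this]]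
      simp [Matrix.mulVec, dotProduct, hB, Finset.sum_apply, mul_comm]
      rw [show x i = ((∑ j, bb.repr ⟨x, hx⟩ j • bb j : L) : Fin n → ℤ) i by rw [← this],
        Submodule.coe_sum, Finset.sum_apply]
      refine Finset.sum_congr rfl (fun j _ => ?_)
      simp [mul_comm]
    -- every element of ↥T → ℤ lies in the projection
    have hsurj : Function.Surjective A.mulVec := by
      intro y
      -- candidate: (sign detA) • adjugate A *ᵥ y
      set w : Fin m → ℤ := A.det.sign • (A.adjugate.mulVec y) with hw
      have hAw : A.mulVec w = A.det.natAbs • y := by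
        rw [hw, Matrix.mulVec_smul, Matrix.mulVec_mulVec, Matrix.mul_adjugate]
        funext i
        have hsgn : A.det.sign * A.det = (A.det.natAbs : ℤ) := by
          rcases lt_trichotomy A.det 0 with h | h | h
          · rw [Int.sign_eq_neg_one_of_neg h]; omega
          · exact absurd h hd
          · rw [Int.sign_eq_one_of_pos h]; omega
        simp only [Matrix.smul_mulVec, Pi.smul_apply, Matrix.smul_apply,
          smul_eq_mul, Matrix.one_mulVec, nsmul_eq_mul]
        rw [← hsgn]; ring
      -- the projected vector
      let e : Fin m ≃ ↥T := Equiv.ofBijective (fun j => ⟨r j, hmemT j⟩)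
        ⟨fun a b hab => r.injective (congrArg Subtype.val hab),
         fun t => by
          rcases Finset.mem_map.mp t.2 with ⟨j, _, hj⟩
          exact ⟨j, Subtype.ext hj⟩⟩
      have hcoe : ∀ j : Fin m, ((e j : ↥T) : Fin n) = r j := fun j => rfl
      set z : ↥T → ℤ := fun t => y (e.symm t) with hz
      have hAB : ∀ (u : Fin m → ℤ) (j : Fin m), A.mulVec u j = B.mulVec u (r j) := by
        intro u j
        simp [hA, Matrix.mulVec, dotProduct, Matrix.submatrix_apply]
      have hmem : (A.det.natAbs) • z ∈ Submodule.map π L := by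
        refine ⟨B.mulVec w, hLB w, ?_⟩
        funext t
        have h1 : π (B.mulVec w) t = B.mulVec w ((t : ↥T) : Fin n) := rfl
        have h2 : t = e (e.symm t) := (e.apply_symm_apply t).symm
        rw [h1, h2, hcoe, ← hAB, hAw]
        simp [hz]
      have hzmem := H T z A.det.natAbs (by simpa using hd) hmem
      obtain ⟨x', hx'L, hπx'⟩ := hzmem
      obtain ⟨v, rfl⟩ := hBL x' hx'L
      refine ⟨v, ?_⟩
      funext j
      have : π (B.mulVec v) (e j) = z (e j) := by rw [hπx']
      simpa [hz, hAB, hπ, LinearMap.funLeft_apply, hcoe] using this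
    obtain ⟨C, hC⟩ := Matrix.mulVec_surjective_iff_exists_right_inverse.mp hsurj
    have : A.det * C.det = 1 := by rw [← Matrix.det_mul, hC, Matrix.det_one]
    have : IsUnit A.det := ⟨⟨A.det, C.det, this, by rw [mul_comm]; exact this⟩, rfl⟩
    rcases Int.isUnit_iff.mp this with h | h
    · exact Or.inl h
    · exact Or.inr h
  · rw [Matrix.range_mulVecLin]
    show L = Submodule.span ℤ (Set.range (Matrix.of (fun i j => (bb j : Fin n → ℤ) i)).transpose)
    have : Set.range (Matrix.of (fun i j => (bb j : Fin n → ℤ) i)).transpose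
        = L.subtype '' (Set.range bb) := by
      ext v; simp [Set.range_comp]; rfl
    rw [this, ← Submodule.map_span, bb.span_eq, Submodule.map_top]
    simp

noncomputable section

variable {n m : ℕ}

/-- the coordinatewise cast as a ℤ-linear map -/
def castMap (n : ℕ) : (Fin n → ℤ) →ₗ[ℤ] (Fin n → ℚ) where
  toFun v := fun i => (v i : ℚ)
  map_add' u v := by funext i; simp
  map_smul' a v := by funext i; simp

lemma castMap_inj (n : ℕ) : Function.Injective (castMap n) := by
  intro u v huv
  funext i
  have : ((u i : ℤ) : ℚ) = ((v i : ℤ) : ℚ) := congrFun huv i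
  exact_mod_cast this

lemma cast_mulVec (M : Matrix (Fin n) (Fin m) ℤ) (u : Fin m → ℤ) (i : Fin n) :
    ((M.mulVec u i : ℤ) : ℚ)
      = (M.map (fun x : ℤ => (x : ℚ))).mulVec (fun j => (u j : ℚ)) i := by
  simp [Matrix.mulVec, dotProduct]

lemma unimod_forward (B : Matrix (Fin n) (Fin m) ℤ)
    (hli : LinearIndependent ℤ B.transpose)
    (hminor : ∀ r : Fin m ↪ Fin n, (B.submatrix r id).det ∈ ({0, 1, -1} : Set ℤ))
    (T : Finset (Fin n)) (y : ↥T → ℤ) (k : ℕ) (hk : k ≠ 0)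
    (hky : k • y ∈ Submodule.map (LinearMap.funLeft ℤ ℤ (fun i : ↥T => (i : Fin n)))
      (LinearMap.range B.mulVecLin)) :
    y ∈ Submodule.map (LinearMap.funLeft ℤ ℤ (fun i : ↥T => (i : Fin n)))
      (LinearMap.range B.mulVecLin) := by
  classical
  set Bq : Matrix (Fin n) (Fin m) ℚ := B.map (fun x : ℤ => (x : ℚ)) with hBq
  set Rows : Fin n → (Fin m → ℚ) := fun i => Bq i with hRows
  -- columns of Bq are ℚ-linearly independent
  have hliQ : LinearIndependent ℚ Bq.transpose := by
    have h1 : LinearIndependent ℤ ((castMap n) ∘ B.transpose) :=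
      hli.map' (castMap n) (LinearMap.ker_eq_bot.mpr (castMap_inj n))
    have h2 : Bq.transpose = (castMap n) ∘ B.transpose := by
      funext j i; rfl
    rw [h2]
    exact (LinearIndependent.iff_fractionRing ℤ ℚ).mp h1
  -- the rows of Bq span everything
  have hspanTop : Submodule.span ℚ (Set.range Rows) = ⊤ := by
    have hinj : Function.Injective Bq.mulVecLin := by
      rw [Matrix.coe_mulVecLin]
      exact Matrix.mulVec_injective_iff.mpr hliQ
    have hrank : Bq.rank = m := by
      rw [Matrix.rank, LinearMap.finrank_range_of_inj hinj, Module.finrank_pi]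
      simp
    have hrankT : Bqᵀ.rank = m := by rw [Matrix.rank_transpose]; exact hrank
    have hr2 : LinearMap.range Bqᵀ.mulVecLin = Submodule.span ℚ (Set.range Rows) := by
      rw [Matrix.range_mulVecLin]; rfl
    have : Module.finrank ℚ (Submodule.span ℚ (Set.range Rows)) = m := by
      rw [← hr2]; simpa [Matrix.rank] using hrankT
    apply Submodule.eq_top_of_finrank_eq
    rw [this, Module.finrank_pi]; simp
  -- choose an independent spanning subset of the rows indexed by T
  obtain ⟨t₀, ht₀s, hspan0, hli0⟩ := exists_linearIndependent ℚ (Rows '' ↑T)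
  have hsub : t₀ ⊆ Set.range Rows :=
    ht₀s.trans (Set.image_subset_range _ _)
  -- extend to a basis made of rows
  set bset := LinearIndepOn.extend (linearIndependent_subtype_iff.mp hli0) hsub with hbset
  have hbsub : bset ⊆ Set.range Rows := LinearIndepOn.extend_subset (linearIndependent_subtype_iff.mp hli0) hsub
  have ht₀b : t₀ ⊆ bset := LinearIndepOn.subset_extend (linearIndependent_subtype_iff.mp hli0) hsub
  have hbli : LinearIndependent ℚ ((↑) : bset → (Fin m → ℚ)) :=
    LinearIndepOn.linearIndepOn_extend (linearIndependent_subtype_iff.mp hli0) hsub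
  have hbspan : ⊤ ≤ Submodule.span ℚ (Set.range ((↑) : bset → (Fin m → ℚ))) := by
    rw [Subtype.range_coe, ← hspanTop]
    exact Submodule.span_le.mpr (LinearIndepOn.subset_span_extend (linearIndependent_subtype_iff.mp hli0) hsub)
  set basis : Module.Basis bset ℚ (Fin m → ℚ) := Module.Basis.mk hbli hbspan with hbasis
  haveI : Fintype bset := FiniteDimensional.fintypeBasisIndex basis
  have hcard : Fintype.card bset = m := by
    have h1 := Module.finrank_eq_card_basis basis
    rw [Module.finrank_pi] at h1
    simpa using h1.symm
  set eb : Fin m ≃ bset := (Fintype.equivFinOfCardEq hcard).symm with heb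
  -- choose a preimage row index for every basis vector
  have hch : ∀ v : bset, ∃ i : Fin n, Rows i = ↑v ∧ ((v : Fin m → ℚ) ∈ t₀ → i ∈ T) := by
    intro v
    by_cases hvt : (v : Fin m → ℚ) ∈ t₀
    · obtain ⟨i, hiT, hi⟩ := ht₀s hvt
      exact ⟨i, hi, fun _ => hiT⟩
    · obtain ⟨i, hi⟩ := hbsub v.2
      exact ⟨i, hi, fun h => absurd h hvt⟩
  choose ρ hρ1 hρ2 using hch
  set r : Fin m ↪ Fin n := ⟨fun j => ρ (eb j), by
    intro a b hab
    have : Rows (ρ (eb a)) = Rows (ρ (eb b)) := congrArg Rows hab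
    rw [hρ1 (eb a), hρ1 (eb b)] at this
    exact eb.injective (Subtype.ext this)⟩ with hr
  set A := B.submatrix r id with hA
  -- the rows indexed by r form an invertible matrix
  have hdetQ : IsUnit (A.map (fun x : ℤ => (x : ℚ))) := by
    apply Matrix.linearIndependent_rows_iff_isUnit.mp
    show LinearIndependent ℚ (fun j => (A.map (fun x : ℤ => (x : ℚ))) j)
    have : (fun j => (A.map (fun x : ℤ => (x : ℚ))) j) = fun j => ((eb j : bset) : Fin m → ℚ) := by
      funext j
      have : (A.map (fun x : ℤ => (x : ℚ))) j = Rows (r j) := by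
        funext kk; rfl
      rw [this, hr]
      exact hρ1 (eb j)
    rw [this]
    exact hbli.comp eb eb.injective
  have hdet : IsUnit A.det := by
    have h1 : IsUnit ((A.map (fun x : ℤ => (x : ℚ))).det) :=
      (Matrix.isUnit_iff_isUnit_det _).mp hdetQ
    have h2 : ((A.det : ℤ) : ℚ) = (A.map (fun x : ℤ => (x : ℚ))).det :=
      RingHom.map_det (Int.castRingHom ℚ) A
    rw [← h2] at h1
    have hne : A.det ≠ 0 := by
      intro h0
      rw [h0] at h1
      simp at h1
    rcases hminor r with h | h | h
    · exact absurd h hne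
    · rw [h]; exact isUnit_one
    · rw [h]; exact (Int.isUnit_iff.mpr (Or.inr rfl))
  haveI : Invertible A := A.invertibleOfIsUnitDet hdet
  set U : Matrix (Fin m) (Fin m) ℤ := ⅟A with hU
  have hAU : A * U = 1 := mul_invOf_self A
  have hUA : U * A = 1 := invOf_mul_self A
  set B'' : Matrix (Fin n) (Fin m) ℤ := B * U with hB''
  have hBid : B''.submatrix r id = 1 := by
    have h1 : B''.submatrix r id = A * U := by
      ext j kk
      simp [hB'', hA, Matrix.mul_apply, Matrix.submatrix_apply]
    rw [h1, hAU]
  have hBrec : B'' * A = B := by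
    rw [hB'', Matrix.mul_assoc, hUA, Matrix.mul_one]
  set B''q : Matrix (Fin n) (Fin m) ℚ := B''.map (fun x : ℤ => (x : ℚ)) with hB''q
  set Rows'' : Fin n → (Fin m → ℚ) := fun i => B''q i with hRows''
  set Uq : Matrix (Fin m) (Fin m) ℚ := U.map (fun x : ℤ => (x : ℚ)) with hUq
  -- Rows'' is the image of Rows under right multiplication by Uq
  have hφ : ∀ i : Fin n, Rows'' i = Uq.vecMulLinear (Rows i) := by
    intro i
    funext kk
    simp only [hRows'', hB''q, hB'', Matrix.coe_vecMulLinear, Matrix.vecMul, Matrix.map_apply,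
      Matrix.mul_apply, dotProduct, hRows, hBq]
    push_cast
    ring_nf
    rfl
  -- every row of B'' indexed by T lies in the span of the image of t₀
  have hrowspan : ∀ t ∈ T, Rows'' t ∈ Submodule.span ℚ (Uq.vecMulLinear '' t₀) := by
    intro t ht
    have h1 : Rows t ∈ Submodule.span ℚ t₀ := by
      rw [hspan0]
      exact Submodule.subset_span ⟨t, ht, rfl⟩
    have h2 := Submodule.mem_map_of_mem (f := Uq.vecMulLinear) h1
    rw [Submodule.map_span] at h2
    rw [hφ t]
    exact h2
  -- basic fact: the rows of B'' indexed by r are standard basis vectors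
  have hstd : ∀ (u : Fin m → ℚ) (j : Fin m), B''q.mulVec u (r j) = u j := by
    intro u j
    have h1 : ∀ kk, B''q (r j) kk = if j = kk then 1 else 0 := by
      intro kk
      have := congrFun (congrFun hBid j) kk
      simp only [Matrix.submatrix_apply, id_eq] at this
      simp [hB''q, Matrix.map_apply, this, Matrix.one_apply]
    simp only [Matrix.mulVec, dotProduct, h1]
    simp [ite_mul]
  -- representation of each row in T as combination of standard rows with indices in T
  have hrep : ∀ t ∈ T, ∃ (p : ℕ) (cf : Fin p → ℚ) (g : Fin p → Fin m),
      (∀ i, (r (g i) : Fin n) ∈ T) ∧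
      ∀ u : Fin m → ℚ, B''q.mulVec u t = ∑ i, cf i * u (g i) := by
    intro t ht
    obtain ⟨p, cf, g, hg⟩ := Submodule.mem_span_set'.mp (hrowspan t ht)
    -- each g i is the image of an element of t₀
    have hgi : ∀ i : Fin p, ∃ j : Fin m, (r j : Fin n) ∈ T ∧
        (g i : Fin m → ℚ) = Rows'' (r j) := by
      intro i
      obtain ⟨v, hvt₀, hv⟩ := (g i).2
      set vb : bset := ⟨v, ht₀b hvt₀⟩ with hvb
      refine ⟨eb.symm vb, ?_, ?_⟩
      · show ρ (eb (eb.symm vb)) ∈ T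
        rw [eb.apply_symm_apply]
        exact hρ2 vb hvt₀
      · rw [← hv, hφ]
        show Uq.vecMulLinear v = Uq.vecMulLinear (Rows (ρ (eb (eb.symm vb))))
        rw [eb.apply_symm_apply, hρ1 vb]
    choose gj hgjT hgjv using hgi
    refine ⟨p, cf, gj, hgjT, ?_⟩
    intro u
    have hrow : B''q.mulVec u t = Rows'' t ⬝ᵥ u := rfl
    rw [hrow, ← hg]
    have h2 : ∀ i : Fin p, (g i : Fin m → ℚ) ⬝ᵥ u = u (gj i) := by
      intro i
      rw [hgjv i]
      have : Rows'' (r (gj i)) ⬝ᵥ u = B''q.mulVec u (r (gj i)) := rfl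
      rw [this, hstd]
    calc (∑ i, cf i • (g i : Fin m → ℚ)) ⬝ᵥ u
        = ∑ i, cf i * ((g i : Fin m → ℚ) ⬝ᵥ u) := by
          simp [dotProduct, Finset.sum_apply, Finset.sum_mul, Finset.mul_sum]
          rw [Finset.sum_comm]
          congr 1; funext i; congr 1; funext j; ring
      _ = ∑ i, cf i * u (gj i) := by
          congr 1; funext i; rw [h2 i]
  -- now solve the congruence
  obtain ⟨x, hxL, hπx⟩ := hky
  obtain ⟨v, rfl⟩ := hxL
  set v'' : Fin m → ℤ := A.mulVec v with hv''
  have hBv : B''.mulVec v'' = B.mulVec v := by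
    rw [hv'', Matrix.mulVec_mulVec, hBrec]
  set w : Fin m → ℤ := fun j => if h : (r j : Fin n) ∈ T then y ⟨r j, h⟩ else 0 with hw
  refine ⟨B''.mulVec w, ⟨U.mulVec w, ?_⟩, ?_⟩
  · show B.mulVec (U.mulVec w) = B''.mulVec w
    rw [Matrix.mulVec_mulVec, ← hB'']
  · funext t
    obtain ⟨tt, ht⟩ := t
    show (B''.mulVec w) tt = y ⟨tt, ht⟩
    obtain ⟨p, cf, g, hgT, hcomb⟩ := hrep tt ht
    set wq : Fin m → ℚ := fun j => (w j : ℚ) with hwq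
    set vq : Fin m → ℚ := fun j => (v'' j : ℚ) with hvq
    have hval : ∀ j : Fin m, (h : (r j : Fin n) ∈ T) → vq j = k * (y ⟨r j, h⟩ : ℚ) := by
      intro j hj
      have h1 : vq j = B''q.mulVec vq (r j) := (hstd vq j).symm
      have h2 : B''q.mulVec vq (r j) = ((B''.mulVec v'' (r j) : ℤ) : ℚ) :=
        (cast_mulVec B'' v'' (r j)).symm
      have h3 : B''.mulVec v'' (r j) = B.mulVec v (r j) := by rw [hBv]
      have h4 : B.mulVec v (r j) = (k • y) ⟨r j, hj⟩ := by
        have := congrFun hπx ⟨r j, hj⟩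
        exact this
      rw [h1, h2, h3, h4]
      simp [Pi.smul_apply, nsmul_eq_mul]
    have hcast1 : ((B''.mulVec w tt : ℤ) : ℚ) = B''q.mulVec wq tt := cast_mulVec B'' w tt
    have hcast2 : ((B''.mulVec v'' tt : ℤ) : ℚ) = B''q.mulVec vq tt := cast_mulVec B'' v'' tt
    have hyt : B''q.mulVec vq tt = k * (y ⟨tt, ht⟩ : ℚ) := by
      rw [← hcast2, hBv]
      have h4 : B.mulVec v tt = (k • y) ⟨tt, ht⟩ := congrFun hπx ⟨tt, ht⟩
      rw [h4]
      simp [Pi.smul_apply, nsmul_eq_mul]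
    have hsum1 : B''q.mulVec wq tt = ∑ i, cf i * (y ⟨r (g i), hgT i⟩ : ℚ) := by
      rw [hcomb wq]
      congr 1; funext i
      congr 1
      simp only [hwq, hw]
      rw [dif_pos (hgT i)]
    have hsum2 : (k : ℚ) * (y ⟨tt, ht⟩ : ℚ) = (k : ℚ) * ∑ i, cf i * (y ⟨r (g i), hgT i⟩ : ℚ) := by
      rw [← hyt, hcomb vq, Finset.mul_sum]
      congr 1; funext i
      rw [hval (g i) (hgT i)]
      ring
    have hkne : (k : ℚ) ≠ 0 := by exact_mod_cast hk
    have hfin : ((B''.mulVec w tt : ℤ) : ℚ) = ((y ⟨tt, ht⟩ : ℤ) : ℚ) := by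
      rw [hcast1, hsum1]
      have := mul_left_cancel₀ hkne hsum2
      rw [← this]
    exact_mod_cast hfin

end

/-- `L ⊆ ℤ^n` is unimodular iff for every subset `T` of the coordinates, the
quotient group `ℤ^T / π_T(L)` by the coordinate projection of `L` is torsion free. -/
theorem isUnimodular_iff_projections_torsionFree {n : ℕ} (L : Submodule ℤ (Fin n → ℤ)) :
    IsUnimodular L ↔
    ∀ T : Finset (Fin n),
      ∀ (x : (↥T → ℤ) ⧸ Submodule.map (LinearMap.funLeft ℤ ℤ (fun i : ↥T => (i : Fin n))) L)
        (m : ℕ), m ≠ 0 → m • x = 0 → x = 0 := by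
  constructor
  · rintro ⟨m, B, hli, hminor, rfl⟩ T
    rw [sat_iff']
    intro y k hk hky
    exact unimod_forward B hli hminor T y k hk hky
  · intro H
    exact unimod_backward L (fun T => (sat_iff' _).mp (H T))
end

section
/- Let L be a subgroup of ℤ^n and let ℝL denote the real span of L inside ℝ^n. Then: (1) every lattice point v ∈ L is a vertex of the arrangement H_L, i.e., there exists a finite set P of pairs (i, j) with i ∈ {1,…,n} and j ∈ ℤ such that v is the unique point x of ℝL satisfying x_i = j for all (i, j) ∈ P; and (2) every vertex of H_L lies in L if and only if L is unimodular. -/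
/-- The canonical map `ℤ^n → ℝ^n`. -/
def intCastVec {n : ℕ} (v : Fin n → ℤ) : Fin n → ℝ := fun i => (v i : ℝ)

/-- `ℝL`, the real span of a lattice `L ⊆ ℤ^n` inside `ℝ^n`. -/
def realSpan {n : ℕ} (L : Submodule ℤ (Fin n → ℤ)) : Submodule ℝ (Fin n → ℝ) :=
  Submodule.span ℝ (intCastVec '' (L : Set (Fin n → ℤ)))

/-- `x` is a vertex of the infinite hyperplane arrangement `H_L` in `ℝL`: there is a finite set
`P` of pairs `(i, j)` such that `x` is the unique point of `ℝL` satisfying `x_i = j` for all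
`(i, j) ∈ P`. -/
def IsVertex {n : ℕ} (L : Submodule ℤ (Fin n → ℤ)) (x : Fin n → ℝ) : Prop :=
  x ∈ realSpan L ∧ ∃ P : Finset (Fin n × ℤ),
    {y : Fin n → ℝ | y ∈ realSpan L ∧ ∀ p ∈ P, y p.1 = (p.2 : ℝ)} = {x}

open Matrix

namespace UniAux

variable {n m : ℕ}

lemma cast_mulVec (B : Matrix (Fin n) (Fin m) ℤ) (u : Fin m → ℤ) :
    intCastVec (B.mulVec u) = (B.map (Int.cast : ℤ → ℝ)).mulVec (fun k => (u k : ℝ)) := by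
  funext i
  have := RingHom.map_mulVec (Int.castRingHom ℝ) B u i
  simpa [intCastVec, Function.comp_def] using this

lemma mulVec_submatrix {ι κ : Type*} [Fintype κ] {α : Type*} [CommRing α]
    (M : Matrix ι κ α) (r : Fin m → ι) (z : κ → α) (k : Fin m) :
    ((M.submatrix r id).mulVec z) k = (M.mulVec z) (r k) := by
  simp [Matrix.mulVec, Matrix.submatrix_apply, dotProduct]

lemma realSpan_range (B : Matrix (Fin n) (Fin m) ℤ) :
    realSpan (LinearMap.range B.mulVecLin)
      = LinearMap.range (B.map (Int.cast : ℤ → ℝ)).mulVecLin := by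
  apply le_antisymm
  · rw [realSpan, Submodule.span_le]
    rintro _ ⟨v, hv, rfl⟩
    obtain ⟨u, rfl⟩ := hv
    exact ⟨(fun k => (u k : ℝ)), (cast_mulVec B u).symm⟩
  · rintro _ ⟨c, rfl⟩
    have : (B.map (Int.cast : ℤ → ℝ)).mulVecLin c
        = ∑ k : Fin m, c k • (B.map (Int.cast : ℤ → ℝ)).transpose k := by
      funext i
      simp [Matrix.mulVecLin_apply, Matrix.mulVec, dotProduct, mul_comm]
    rw [this]
    refine Submodule.sum_mem _ fun k _ => Submodule.smul_mem _ _ ?_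
    refine Submodule.subset_span ⟨B.transpose k, ⟨Pi.single k 1, ?_⟩, ?_⟩
    · funext i; simp [Matrix.mulVecLin_apply, Matrix.mulVec_single]
    · funext i; simp [intCastVec, Matrix.transpose_apply, Matrix.map_apply]

lemma exists_det_ne_zero_of_linearIndependent_cols
    {K : Type*} [Field K] {ι : Type*} [Fintype ι] [DecidableEq ι]
    (M : Matrix ι (Fin m) K) (h : LinearIndependent K M.transpose) :
    ∃ r : Fin m ↪ ι, (M.submatrix r id).det ≠ 0 := by
  classical
  have hrank : M.rank = m := by
    have := h.rank_matrix
    change Mᵀ.rank = _ at this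
    rwa [Matrix.rank_transpose, Fintype.card_fin] at this
  have hrow : Module.finrank K (Submodule.span K (Set.range (fun i : ι => M i))) = m := by
    exact (Matrix.rank_eq_finrank_span_row M).symm.trans hrank
  obtain ⟨b, hbsub, hbspan, hbind⟩ := exists_linearIndependent K (Set.range (fun i : ι => M i))
  have hbfin : b.Finite := Set.Finite.subset (Set.finite_range _) hbsub
  haveI : Fintype b := hbfin.fintype
  have hbcard : Fintype.card b = m := by
    have := finrank_span_set_eq_card hbind
    rw [hbspan, hrow] at this
    rw [Set.toFinset_card] at this
    omega
  let e : Fin m ≃ b := (Fintype.equivFinOfCardEq hbcard).symm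
  have hg : ∀ v : b, ∃ i : ι, M i = (v : Fin m → K) := fun v => hbsub v.2
  choose g hgspec using hg
  have hginj : Function.Injective g := by
    intro v w hvw
    apply Subtype.ext
    rw [← hgspec v, ← hgspec w, hvw]
  let r : Fin m ↪ ι := ⟨fun k => g (e k), fun a b hab => e.injective (hginj hab)⟩
  refine ⟨r, ?_⟩
  have hrows : (fun k : Fin m => (M.submatrix r id) k) = fun k => ((e k : Fin m → K)) := by
    funext k
    have := hgspec (e k)
    funext j
    exact congrFun this j
  have hindrows : LinearIndependent K (fun k : Fin m => (M.submatrix r id) k) := by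
    rw [hrows]
    exact hbind.comp e e.injective
  have hu := Matrix.linearIndependent_rows_iff_isUnit.mp hindrows
  have := (Matrix.isUnit_iff_isUnit_det _).mp hu
  exact this.ne_zero

def castQLin (n : ℕ) : (Fin n → ℤ) →ₗ[ℤ] (Fin n → ℚ) where
  toFun v := fun i => (v i : ℚ)
  map_add' u v := by funext i; simp only [Pi.add_apply]; push_cast; ring
  map_smul' c v := by
    funext i
    simp only [Pi.smul_apply, smul_eq_mul, zsmul_eq_mul, RingHom.id_apply]
    push_cast
    try ring

lemma exists_int_det_ne_zero (B : Matrix (Fin n) (Fin m) ℤ)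
    (h : LinearIndependent ℤ B.transpose) :
    ∃ r : Fin m ↪ Fin n, (B.submatrix r id).det ≠ 0 := by
  have hker : LinearMap.ker (castQLin n) = ⊥ := by
    rw [LinearMap.ker_eq_bot]
    intro u v huv
    funext i
    have h3 := congrFun huv i
    simp only [castQLin, LinearMap.coe_mk, AddHom.coe_mk] at h3
    exact_mod_cast h3
  have h1 : LinearIndependent ℤ ((B.map (Int.cast : ℤ → ℚ)).transpose) := by
    have h2 := h.map' (castQLin n) hker
    have he : (castQLin n) ∘ B.transpose = (B.map (Int.cast : ℤ → ℚ)).transpose := by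
      funext k i
      rfl
    rwa [he] at h2
  have h2 : LinearIndependent ℚ ((B.map (Int.cast : ℤ → ℚ)).transpose) :=
    (LinearIndependent.iff_fractionRing ℤ ℚ).mp h1
  obtain ⟨r, hr⟩ := exists_det_ne_zero_of_linearIndependent_cols _ h2
  refine ⟨r, fun hdet => hr ?_⟩
  have : ((B.map (Int.cast : ℤ → ℚ)).submatrix r id).det
      = (((B.submatrix r id).det : ℤ) : ℚ) := by
    rw [Matrix.submatrix_map]
    simpa using (RingHom.map_det (Int.castRingHom ℚ) (B.submatrix r id)).symm
  rw [this, hdet]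
  simp

lemma det_cast_real (A : Matrix (Fin m) (Fin m) ℤ) :
    (A.map (Int.cast : ℤ → ℝ)).det = ((A.det : ℤ) : ℝ) := by
  simpa using (RingHom.map_det (Int.castRingHom ℝ) A).symm

lemma realB_injective (B : Matrix (Fin n) (Fin m) ℤ) (h : LinearIndependent ℤ B.transpose) :
    Function.Injective (B.map (Int.cast : ℤ → ℝ)).mulVec := by
  obtain ⟨r, hd⟩ := exists_int_det_ne_zero B h
  set A : Matrix (Fin m) (Fin m) ℝ := (B.submatrix r id).map (Int.cast : ℤ → ℝ) with hA
  have hdet : A.det ≠ 0 := by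
    rw [hA, det_cast_real]
    exact_mod_cast hd
  have hAunit : IsUnit A := (Matrix.isUnit_iff_isUnit_det A).mpr (isUnit_iff_ne_zero.mpr hdet)
  have hAinj : Function.Injective A.mulVec := Matrix.mulVec_injective_iff_isUnit.mpr hAunit
  intro z1 z2 hz
  apply hAinj
  funext k
  have e1 := mulVec_submatrix (B.map (Int.cast : ℤ → ℝ)) r z1 k
  have e2 := mulVec_submatrix (B.map (Int.cast : ℤ → ℝ)) r z2 k
  rw [Matrix.submatrix_map] at e1 e2
  rw [← hA] at e1 e2
  rw [e1, e2, hz]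

end UniAux

namespace UniAux

lemma exists_basis_matrix {n : ℕ} (L : Submodule ℤ (Fin n → ℤ)) :
    ∃ (m : ℕ) (B : Matrix (Fin n) (Fin m) ℤ),
      LinearIndependent ℤ B.transpose ∧ L = LinearMap.range B.mulVecLin := by
  obtain ⟨m, b⟩ := Submodule.basisOfPid (Pi.basisFun ℤ (Fin n)) L
  refine ⟨m, Matrix.of (fun i k => (b k : Fin n → ℤ) i), ?_, ?_⟩
  · have he : (Matrix.of (fun i k => (b k : Fin n → ℤ) i)).transpose
        = (L.subtype ∘ b) := by
      funext k i
      rfl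
    rw [he]
    exact b.linearIndependent.map' L.subtype (Submodule.ker_subtype L)
  · rw [Matrix.range_mulVecLin]
    have he : Set.range (Matrix.of (fun i k => (b k : Fin n → ℤ) i)).transpose
        = L.subtype '' (Set.range b) := by
      rw [← Set.range_comp]
      rfl
    change L = Submodule.span ℤ (Set.range (Matrix.of (fun i k => (b k : Fin n → ℤ) i)).transpose)
    rw [he, ← Submodule.map_span, b.span_eq, Submodule.map_top, Submodule.range_subtype]

end UniAux

/-- every lattice point of `L` is a vertex of the arrangement `H_L`, and every
vertex of `H_L` lies in `L` if and only if `L` is unimodular. -/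
theorem lattice_points_are_vertices_and_no_new_vertices_iff_unimodular
    {n : ℕ} (L : Submodule ℤ (Fin n → ℤ)) :
    (∀ v ∈ L, IsVertex L (intCastVec v)) ∧
    ((∀ x : Fin n → ℝ, IsVertex L x → ∃ v ∈ L, intCastVec v = x) ↔ IsUnimodular L) := by
  classical
  constructor
  · -- every lattice point is a vertex
    intro v hv
    refine ⟨Submodule.subset_span ⟨v, hv, rfl⟩, Finset.univ.image (fun i => (i, v i)), ?_⟩
    ext y
    simp only [Set.mem_setOf_eq, Set.mem_singleton_iff]
    constructor
    · rintro ⟨-, hy⟩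
      funext i
      exact hy (i, v i) (Finset.mem_image_of_mem _ (Finset.mem_univ i))
    · rintro rfl
      refine ⟨Submodule.subset_span ⟨v, hv, rfl⟩, ?_⟩
      intro p hp
      simp only [Finset.mem_image, Finset.mem_univ, true_and] at hp
      obtain ⟨i, rfl⟩ := hp
      rfl
  constructor
  · -- forward: no new vertices → unimodular
    intro H
    obtain ⟨m, B, hind, hrange⟩ := UniAux.exists_basis_matrix L
    refine ⟨m, B, hind, ?_, hrange⟩
    intro r
    set d : ℤ := (B.submatrix r id).det with hd
    rcases eq_or_ne d 0 with h0 | h0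
    · left; exact h0
    set A : Matrix (Fin m) (Fin m) ℝ := (B.submatrix r id).map (Int.cast : ℤ → ℝ) with hA
    have hdetA : A.det ≠ 0 := by
      rw [hA, UniAux.det_cast_real]
      exact_mod_cast h0
    have hAunit : IsUnit A := (Matrix.isUnit_iff_isUnit_det A).mpr (isUnit_iff_ne_zero.mpr hdetA)
    have hAinj : Function.Injective A.mulVec := Matrix.mulVec_injective_iff_isUnit.mpr hAunit
    have hrow : ∀ z : Fin m → ℝ, ∀ k,
        ((B.map (Int.cast : ℤ → ℝ)).mulVec z) (r k) = (A.mulVec z) k := by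
      intro z k
      rw [hA, ← Matrix.submatrix_map]
      exact (UniAux.mulVec_submatrix (B.map (Int.cast : ℤ → ℝ)) r z k).symm
    have key : ∀ w : Fin m → ℤ, ∃ u : Fin m → ℤ,
        A⁻¹.mulVec (fun k => (w k : ℝ)) = fun k => (u k : ℝ) := by
      intro w
      set c : Fin m → ℝ := A⁻¹.mulVec (fun k => (w k : ℝ)) with hc
      set x : Fin n → ℝ := (B.map (Int.cast : ℤ → ℝ)).mulVec c with hx
      have hAc : A.mulVec c = fun k => (w k : ℝ) := by
        rw [hc, Matrix.mulVec_mulVec,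
          Matrix.mul_nonsing_inv _ ((Matrix.isUnit_iff_isUnit_det A).mp hAunit),
          Matrix.one_mulVec]
      have hxmem : x ∈ realSpan L := by
        rw [hrange, UniAux.realSpan_range]
        exact ⟨c, rfl⟩
      have hvx : IsVertex L x := by
        refine ⟨hxmem, Finset.univ.image (fun k => (r k, w k)), ?_⟩
        ext y
        simp only [Set.mem_setOf_eq, Set.mem_singleton_iff]
        constructor
        · rintro ⟨hymem, hy⟩
          rw [hrange, UniAux.realSpan_range] at hymem
          obtain ⟨c', rfl⟩ := hymem
          have h1 : A.mulVec c' = fun k => (w k : ℝ) := by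
            funext k
            rw [← hrow c' k]
            exact hy (r k, w k) (Finset.mem_image_of_mem _ (Finset.mem_univ k))
          have h2 : c' = c := hAinj (by rw [h1, hAc])
          rw [hx, h2]
          rfl
        · rintro rfl
          refine ⟨hxmem, ?_⟩
          intro p hp
          simp only [Finset.mem_image, Finset.mem_univ, true_and] at hp
          obtain ⟨k, rfl⟩ := hp
          rw [hx]
          exact (hrow c k).trans (congrFun hAc k)
      obtain ⟨v, hvL, hvx2⟩ := H x hvx
      rw [hrange] at hvL
      obtain ⟨u, rfl⟩ := hvL
      refine ⟨u, ?_⟩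
      have h1 : (B.map (Int.cast : ℤ → ℝ)).mulVec (fun k => (u k : ℝ)) = x := by
        rw [← UniAux.cast_mulVec]
        exact hvx2
      have h2 : A.mulVec (fun k => (u k : ℝ)) = A.mulVec c := by
        funext k
        rw [← hrow _ k, ← hrow c k, h1, hx]
      exact (hAinj h2).symm
    choose U hU using fun j : Fin m => key (Pi.single j 1)
    have hAinv : A⁻¹ = Matrix.of (fun k j => (U j k : ℝ)) := by
      funext k j
      have hcast : (fun k' => ((Pi.single j (1:ℤ) : Fin m → ℤ) k' : ℝ)) = Pi.single j (1:ℝ) := by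
        funext k'
        by_cases hkj : k' = j <;> simp [Pi.single_apply, hkj]
      have h4 : (A⁻¹.mulVec (Pi.single j (1:ℝ))) k = (U j k : ℝ) := by
        rw [← hcast]
        exact congrFun (hU j) k
      have h5 : (A⁻¹.mulVec (Pi.single j (1:ℝ))) k = A⁻¹ k j := by
        simp [Matrix.mulVec_single]
      rw [Matrix.of_apply, ← h4, h5]
    set Cint : Matrix (Fin m) (Fin m) ℤ := Matrix.of (fun k j => U j k) with hCint
    have h6 : A * (Cint.map (Int.cast : ℤ → ℝ)) = 1 := by
      have : Cint.map (Int.cast : ℤ → ℝ) = A⁻¹ := by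
        rw [hAinv]
        rfl
      rw [this]
      exact Matrix.mul_nonsing_inv _ ((Matrix.isUnit_iff_isUnit_det A).mp hAunit)
    have hmul : (B.submatrix r id) * Cint = 1 := by
      funext k j
      have h8 := congrFun (congrFun h6 k) j
      have h9 : (A * Cint.map (Int.cast : ℤ → ℝ)) k j
          = (((B.submatrix r id * Cint) k j : ℤ) : ℝ) := by
        simp only [hA, Matrix.mul_apply, Matrix.map_apply]
        push_cast
        rfl
      have h10 : ((1 : Matrix (Fin m) (Fin m) ℝ) k j)
          = (((1 : Matrix (Fin m) (Fin m) ℤ) k j : ℤ) : ℝ) := by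
        by_cases hkj : k = j <;> simp [Matrix.one_apply, hkj]
      rw [h9, h10] at h8
      exact_mod_cast h8
    have hdu : IsUnit d := by
      have h9 := congrArg Matrix.det hmul
      rw [Matrix.det_mul, Matrix.det_one] at h9
      exact IsUnit.of_mul_eq_one _ h9
    rcases Int.isUnit_iff.mp hdu with h | h
    · right; left; exact h
    · right; right; exact h
  · -- backward: unimodular → no new vertices
    rintro ⟨m, B, hind, hmin, rfl⟩
    intro x hx
    obtain ⟨hxmem, P, hP⟩ := hx
    rw [UniAux.realSpan_range] at hxmem
    obtain ⟨c, hc⟩ := hxmem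
    have hinj := UniAux.realB_injective B hind
    have hxP : ∀ p ∈ P, x p.1 = (p.2 : ℝ) := by
      have hxx : x ∈ ({x} : Set (Fin n → ℝ)) := rfl
      rw [← hP] at hxx
      exact hxx.2
    set Rb : Matrix (Fin n) (Fin m) ℝ := B.map (Int.cast : ℤ → ℝ) with hRb
    have hxc : Rb.mulVec c = x := hc
    set M : Matrix {p // p ∈ P} (Fin m) ℝ := Matrix.of (fun p k => Rb p.1.1 k) with hM
    have hMind : LinearIndependent ℝ M.transpose := by
      refine Fintype.linearIndependent_iff.mpr ?_
      intro g hg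
      have hMg : M.mulVec g = 0 := by
        funext p
        have h1 := congrFun hg p
        simpa [Matrix.mulVec, dotProduct, mul_comm] using h1
      have hRbg : ∀ p (hp : p ∈ P), (Rb.mulVec g) p.1 = 0 := by
        intro p hp
        have h8 : Rb.mulVec g p.1 = M.mulVec g ⟨p, hp⟩ := by
          simp [hM, Matrix.mulVec, dotProduct]
        rw [h8, hMg]
        rfl
      have hy : Rb.mulVec (c + g) = x := by
        have hymem : Rb.mulVec (c + g) ∈
            {y | y ∈ realSpan (LinearMap.range B.mulVecLin) ∧ ∀ p ∈ P, y p.1 = (p.2:ℝ)} := by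
          constructor
          · rw [UniAux.realSpan_range]
            exact ⟨c + g, rfl⟩
          · intro p hp
            have h2 : Rb.mulVec (c + g) p.1 = Rb.mulVec c p.1 + Rb.mulVec g p.1 := by
              rw [Matrix.mulVec_add]
              rfl
            rw [h2, hRbg p hp, add_zero, hxc]
            exact hxP p hp
        rw [hP] at hymem
        exact hymem
      have hg0 : Rb.mulVec g = 0 := by
        have h9 : Rb.mulVec (c + g) = Rb.mulVec c + Rb.mulVec g := Matrix.mulVec_add _ _ _
        rw [hy, hxc] at h9
        have := congrArg (fun z => z - x) h9
        simpa using this.symm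
      have : g = 0 := hinj (by rw [hg0, Matrix.mulVec_zero])
      intro k
      rw [this]
      rfl
    obtain ⟨r0, hr0⟩ := UniAux.exists_det_ne_zero_of_linearIndependent_cols M hMind
    have hfstinj : Function.Injective (fun p : {p // p ∈ P} => p.1.1) := by
      intro p q hpq
      have hpq' : (p : Fin n × ℤ).1 = (q : Fin n × ℤ).1 := hpq
      apply Subtype.ext
      have h1 := hxP p.1 p.2
      have h2 := hxP q.1 q.2
      rw [hpq'] at h1
      have h3 : (p.1.2 : ℝ) = (q.1.2 : ℝ) := h1.symm.trans h2
      have h4 : p.1.2 = q.1.2 := by exact_mod_cast h3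
      exact Prod.ext hpq' h4
    set r : Fin m ↪ Fin n := ⟨fun k => (r0 k).1.1, fun a b hab => r0.injective (hfstinj hab)⟩ with hr
    have hAeq : Rb.submatrix r id = M.submatrix r0 id := by
      ext k j
      rfl
    have hdetA : (Rb.submatrix r id).det ≠ 0 := by
      rw [hAeq]
      exact hr0
    have hsubmap : Rb.submatrix r id = (B.submatrix r id).map (Int.cast : ℤ → ℝ) := by
      rw [hRb, Matrix.submatrix_map]
    have hdZ : (B.submatrix r id).det ≠ 0 := by
      intro h0
      apply hdetA
      rw [hsubmap, UniAux.det_cast_real, h0]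
      simp
    have hdunit : IsUnit (B.submatrix r id).det := by
      rcases hmin r with h | h | h
      · exact absurd h hdZ
      · rw [h]; exact isUnit_one
      · rw [h]; exact IsUnit.neg isUnit_one
    set w : Fin m → ℤ := fun k => (r0 k).1.2 with hw
    set u : Fin m → ℤ := (B.submatrix r id)⁻¹.mulVec w with hu
    refine ⟨B.mulVec u, ⟨u, rfl⟩, ?_⟩
    rw [UniAux.cast_mulVec]
    have hAunit : IsUnit (Rb.submatrix r id) :=
      (Matrix.isUnit_iff_isUnit_det _).mpr (isUnit_iff_ne_zero.mpr hdetA)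
    have hAinj : Function.Injective (Rb.submatrix r id).mulVec :=
      Matrix.mulVec_injective_iff_isUnit.mpr hAunit
    have hs1 : (Rb.submatrix r id).mulVec c = fun k => (w k : ℝ) := by
      funext k
      rw [UniAux.mulVec_submatrix, hxc]
      exact hxP (r0 k).1 (r0 k).2
    have hBu : (B.submatrix r id).mulVec u = w := by
      rw [hu, Matrix.mulVec_mulVec, Matrix.mul_nonsing_inv _ hdunit, Matrix.one_mulVec]
    have hs2 : (Rb.submatrix r id).mulVec (fun k => (u k : ℝ)) = fun k => (w k : ℝ) := by
      rw [hsubmap]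
      funext k
      have h10 := RingHom.map_mulVec (Int.castRingHom ℝ) (B.submatrix r id) u k
      rw [hBu] at h10
      exact h10.symm
    have := hAinj (hs1 ▸ hs2)
    rw [this, hxc]
end

section
/- Let L be a unimodular subgroup of ℤ^n and let a, b ∈ L be distinct. Then a − b is a circuit of L if and only if there exists u ∈ ℝL such that the closed face F_u = {x ∈ ℝL : ⌊u_i⌋ ≤ x_i ≤ ⌈u_i⌉ for all i} contains both a and b and has affine dimension 1. -/
/-- The closed face `F_u = {x ∈ ℝL : ⌊u_i⌋ ≤ x_i ≤ ⌈u_i⌉ for all i}` of the arrangement `H_L`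
determined by a point `u`. -/
def closedFace {n : ℕ} (L : Submodule ℤ (Fin n → ℤ)) (u : Fin n → ℝ) : Set (Fin n → ℝ) :=
  {x | x ∈ realSpan L ∧ ∀ i, (⌊u i⌋ : ℝ) ≤ x i ∧ x i ≤ (⌈u i⌉ : ℝ)}

/-- `v` is a circuit of `L`: a nonzero vector of `L` whose coordinates have gcd `1` and whose
support is minimal with respect to inclusion among supports of nonzero elements of `L`. -/
def IsCircuit {n : ℕ} (L : Submodule ℤ (Fin n → ℤ)) (v : Fin n → ℤ) : Prop :=
  v ∈ L ∧ v ≠ 0 ∧ Finset.univ.gcd v = 1 ∧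
    ∀ w ∈ L, w ≠ 0 → {i | w i ≠ 0} ⊆ {i | v i ≠ 0} → {i | w i ≠ 0} = {i | v i ≠ 0}


open Matrix

lemma castVec_mulVec {n m : ℕ} {R : Type*} [CommRing R] (f : ℤ →+* R)
    (B : Matrix (Fin n) (Fin m) ℤ) (z : Fin m → ℤ) :
    (fun i => f ((B *ᵥ z) i)) = (B.map f) *ᵥ (f ∘ z) := by
  funext i
  exact f.map_mulVec B z i

lemma clear_denoms {m : ℕ} (y : Fin m → ℚ) :
    ∃ (N : ℤ) (z : Fin m → ℤ), N ≠ 0 ∧ ∀ j, (z j : ℚ) = N * y j := by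
  refine ⟨∏ j, ((y j).den : ℤ), fun j => (y j).num * (∏ k ∈ Finset.univ.erase j, ((y k).den : ℤ)),
    ?_, ?_⟩
  · exact Finset.prod_ne_zero_iff.2 fun j _ => Int.natCast_ne_zero.2 (y j).den_nz
  · intro j
    have hden : ((y j).den : ℚ) ≠ 0 := by exact_mod_cast (y j).den_nz
    have hnum : ((y j).num : ℚ) = y j * ((y j).den : ℚ) := by
      exact (div_eq_iff hden).mp (Rat.num_div_den (y j))
    have hprod : (∏ k, ((y k).den : ℤ))
        = ((y j).den : ℤ) * ∏ k ∈ Finset.univ.erase j, ((y k).den : ℤ) :=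
      (Finset.mul_prod_erase _ _ (Finset.mem_univ j)).symm
    rw [hprod]
    push_cast
    rw [hnum]
    ring

open Matrix Module in
lemma circuit_key {n : ℕ} (L : Submodule ℤ (Fin n → ℤ)) (hL : IsUnimodular L)
    (c : Fin n → ℤ) (hc : IsCircuit L c) :
    (∀ i, c i = 0 ∨ c i = 1 ∨ c i = -1) ∧
    (∀ x : Fin n → ℝ, x ∈ realSpan L → (∀ j, c j = 0 → x j = 0) →
      ∃ t : ℝ, x = t • intCastVec c) := by
  classical
  obtain ⟨m, B, hind, hdet, hLr⟩ := hL
  subst hLr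
  obtain ⟨hcL, hc0, hgcd, hmin⟩ := hc
  obtain ⟨x₀, hx₀⟩ := hcL
  rw [Matrix.mulVecLin_apply] at hx₀
  obtain ⟨i₀, hi₀⟩ : ∃ i, c i ≠ 0 := Function.ne_iff.mp hc0
  have hBinj : ∀ z : Fin m → ℤ, B *ᵥ z = 0 → z = 0 := by
    intro z hz
    have h := Fintype.linearIndependent_iff.mp hind z ?_
    · funext j; exact h j
    · funext i
      have : (B *ᵥ z) i = 0 := by rw [hz]; rfl
      simpa [Matrix.mulVec, dotProduct, Finset.sum_apply, mul_comm] using this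
  set Aq : Matrix (Fin n) (Fin m) ℚ := B.map (Int.castRingHom ℚ) with hAq
  set Ar : Matrix (Fin n) (Fin m) ℚ :=
    Matrix.of (fun i j => if c i = 0 ∨ i = i₀ then Aq i j else 0) with hAr
  have hArrow : ∀ (i) (y : Fin m → ℚ),
      (Ar *ᵥ y) i = if c i = 0 ∨ i = i₀ then (Aq *ᵥ y) i else 0 := by
    intro i y
    by_cases h : c i = 0 ∨ i = i₀ <;>
      simp [hAr, Matrix.mulVec, dotProduct, h]
  -- injectivity of Ar over ℚ
  have hq : ∀ y : Fin m → ℚ, Ar *ᵥ y = 0 → y = 0 := by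
    intro y hy
    obtain ⟨N, z, hN, hz⟩ := clear_denoms y
    have hcz : (fun j => ((z j : ℚ))) = N • y := by
      funext j
      show (z j : ℚ) = N • y j
      rw [zsmul_eq_mul]; exact hz j
    set w : Fin n → ℤ := B *ᵥ z with hw
    have hwq : ∀ i, (c i = 0 ∨ i = i₀) → w i = 0 := by
      intro i hcond
      have h2 : (Aq *ᵥ y) i = 0 := by
        have h3 := hArrow i y
        rw [hy] at h3
        simpa [hcond] using h3.symm
      have h1 : ((w i : ℚ)) = (Aq *ᵥ (fun j => ((z j : ℚ)))) i := by
        exact congrFun (castVec_mulVec (Int.castRingHom ℚ) B z) i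
      have : ((w i : ℚ)) = 0 := by
        rw [h1, hcz, Matrix.mulVec_smul]
        show N • ((Aq *ᵥ y) i) = 0
        rw [h2, smul_zero]
      exact_mod_cast this
    have hw0 : w = 0 := by
      by_contra hw0
      have hsub : {i | w i ≠ 0} ⊆ {i | c i ≠ 0} := by
        intro i hi
        simp only [Set.mem_setOf_eq] at hi ⊢
        intro hci
        exact hi (hwq i (Or.inl hci))
      have hmem : w ∈ LinearMap.range B.mulVecLin :=
        LinearMap.mem_range.mpr ⟨z, by simp [Matrix.mulVecLin_apply, hw]⟩
      have heq := hmin w hmem hw0 hsub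
      have h4 : i₀ ∈ {i | w i ≠ 0} := heq ▸ hi₀
      exact h4 (hwq i₀ (Or.inr rfl))
    have hz0 : z = 0 := hBinj z hw0
    have : N • y = 0 := by rw [← hcz, hz0]; funext j; simp
    rcases smul_eq_zero.mp this with h | h
    · exact absurd h hN
    · exact h
  -- rank of Ar is m, rows span
  have hArinj : Function.Injective Ar.mulVecLin := by
    rw [← LinearMap.ker_eq_bot]
    apply LinearMap.ker_eq_bot'.mpr
    intro y hy
    exact hq y (by simpa [Matrix.mulVecLin_apply] using hy)
  have hrank : Ar.rank = m := by
    rw [Matrix.rank, LinearMap.finrank_range_of_inj hArinj]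
    simp
  have hspan : Submodule.span ℚ (Set.range Ar) = ⊤ := by
    apply Submodule.eq_top_of_finrank_eq
    have h := Matrix.rank_eq_finrank_span_row Ar
    rw [hrank] at h
    exact h.symm.trans (by simp)
  -- extend the nonzero row i₀ to a basis made of rows
  have hAqx₀ : Aq *ᵥ (fun j => ((x₀ j : ℚ))) = fun i => ((c i : ℚ)) := by
    funext i
    have h := congrFun (castVec_mulVec (Int.castRingHom ℚ) B x₀) i
    rw [hx₀] at h
    exact h.symm
  have hrow₀ : Ar i₀ ≠ 0 := by
    intro h0
    have h1 : (Ar *ᵥ (fun j => ((x₀ j : ℚ)))) i₀ = 0 := by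
      show Ar i₀ ⬝ᵥ _ = 0
      rw [h0]; simp
    rw [hArrow] at h1
    simp only [or_true, if_true, hAqx₀] at h1
    exact hi₀ (by exact_mod_cast h1)
  have hs : LinearIndepOn ℚ id ({Ar i₀} : Set (Fin m → ℚ)) :=
    (linearIndepOn_singleton_iff ℚ).mpr hrow₀
  have hst : ({Ar i₀} : Set (Fin m → ℚ)) ⊆ Set.range Ar := by
    rw [Set.singleton_subset_iff]; exact ⟨i₀, rfl⟩
  have ht : ⊤ ≤ Submodule.span ℚ (Set.range Ar) := hspan.ge
  set basis := Basis.extendLe hs hst ht with hbasis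
  haveI : Fintype ↥(hs.extend hst) := FiniteDimensional.fintypeBasisIndex basis
  have hcard : Fintype.card ↥(hs.extend hst) = m := by
    have := Module.finrank_eq_card_basis basis
    simp only [Module.finrank_pi, Fintype.card_fin] at this
    exact this.symm
  set e : Fin m ≃ ↥(hs.extend hst) := (Fintype.equivFinOfCardEq hcard).symm with he
  have hchoice : ∀ v : ↥(hs.extend hst), ∃ j : Fin n, Ar j = ↑v := by
    intro v
    exact hs.extend_subset hst v.2
  set r0 : ↥(hs.extend hst) → Fin n := fun v =>
    if (v : Fin m → ℚ) = Ar i₀ then i₀ else (hchoice v).choose with hr0_def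
  have hr0 : ∀ v, Ar (r0 v) = ↑v := by
    intro v
    by_cases h : (v : Fin m → ℚ) = Ar i₀
    · rw [hr0_def]; simp only [h, if_true]
    · rw [hr0_def]; simp only [h, if_false]; exact (hchoice v).choose_spec
  have hr0inj : Function.Injective r0 := fun v v' h => Subtype.ext (by rw [← hr0 v, ← hr0 v', h])
  have hr0allow : ∀ v, c (r0 v) = 0 ∨ r0 v = i₀ := by
    intro v
    by_contra hcn
    push_neg at hcn
    have hzero : Ar (r0 v) = 0 := by
      funext j
      simp [hAr, hcn.1, hcn.2]
    have hvne : (v : Fin m → ℚ) ≠ 0 := by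
      have := basis.ne_zero v
      rwa [hbasis, Basis.coe_extendLe] at this
    exact hvne (by rw [← hr0 v, hzero])
  have hr0noti₀ : ∀ v : ↥(hs.extend hst), (v : Fin m → ℚ) ≠ Ar i₀ → c (r0 v) = 0 := by
    intro v h
    rcases hr0allow v with h1 | h1
    · exact h1
    · exact absurd (by rw [← hr0 v, h1] : (v : Fin m → ℚ) = Ar i₀) h
  set r : Fin m ↪ Fin n := ⟨fun q => r0 (e q), fun q q' hqq => e.injective (hr0inj hqq)⟩ with hr
  have hbmem : Ar i₀ ∈ hs.extend hst := hs.subset_extend hst rfl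
  set p : Fin m := e.symm ⟨Ar i₀, hbmem⟩ with hp_def
  have hrp : r p = i₀ := by
    show r0 (e p) = i₀
    rw [hp_def, Equiv.apply_symm_apply, hr0_def]
    simp
  have hrq : ∀ q, q ≠ p → c (r q) = 0 := by
    intro q hq
    apply hr0noti₀
    intro hv
    apply hq
    have h5 : e q = ⟨Ar i₀, hbmem⟩ := Subtype.ext hv
    rw [hp_def, ← h5, Equiv.symm_apply_apply]
  -- determinant of the chosen submatrix is ±1
  have hMrows : ∀ q, (Aq.submatrix r id) q = ((e q : Fin m → ℚ)) := by
    intro q; funext j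
    have h1 : Ar (r q) = ↑(e q) := hr0 (e q)
    have h2 : Ar (r q) j = Aq (r q) j := by
      have hallow : c (r q) = 0 ∨ r q = i₀ := hr0allow (e q)
      rcases hallow with h | h <;> simp [hAr, h]
    rw [Matrix.submatrix_apply, id_eq, ← h2, h1]
  have hli : LinearIndependent ℚ (fun q => (Aq.submatrix r id) q) := by
    have h6 : (fun q => (Aq.submatrix r id) q) = (fun q => basis (e q)) := by
      funext q
      rw [hMrows q, hbasis, Basis.coe_extendLe]
    rw [h6]
    exact basis.linearIndependent.comp e e.injective
  have hMq_unit : IsUnit (Aq.submatrix r id) := Matrix.linearIndependent_rows_iff_isUnit.mp hli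
  have hdetq : (Aq.submatrix r id).det ≠ 0 :=
    ((Matrix.isUnit_iff_isUnit_det _).mp hMq_unit).ne_zero
  have hdetZ : (B.submatrix r id).det ≠ 0 := by
    intro h
    apply hdetq
    have h7 : (Aq.submatrix r id) = (B.submatrix r id).map (Int.castRingHom ℚ) := by
      ext q j; simp [hAq]
    rw [h7, ← RingHom.mapMatrix_apply, ← RingHom.map_det, h, map_zero]
  have hdet1 : (B.submatrix r id).det = 1 ∨ (B.submatrix r id).det = -1 := by
    have := hdet r
    simp only [Set.mem_insert_iff, Set.mem_singleton_iff] at this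
    rcases this with h | h | h
    · exact absurd h hdetZ
    · exact Or.inl h
    · exact Or.inr h
  -- the mulVec identity for the submatrix
  set M : Matrix (Fin m) (Fin m) ℤ := B.submatrix r id with hM
  have hMx : M *ᵥ x₀ = Pi.single p (c i₀) := by
    funext q
    have h1 : (M *ᵥ x₀) q = (B *ᵥ x₀) (r q) := by
      simp [hM, Matrix.mulVec, dotProduct, Matrix.submatrix_apply]
    rw [h1, hx₀]
    by_cases h : q = p
    · subst h; rw [hrp]; simp
    · rw [Pi.single_eq_of_ne h, hrq q h]
  have hkey : ∀ i : Fin n, ∃ d : ℤ, (d = 0 ∨ d = 1 ∨ d = -1) ∧ M.det * c i = c i₀ * d := by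
    intro i
    by_cases hii : i = i₀
    · subst hii
      refine ⟨M.det, ?_, by ring⟩
      have := hdet r
      simpa only [Set.mem_insert_iff, Set.mem_singleton_iff] using this
    by_cases hci : c i = 0
    · exact ⟨0, Or.inl rfl, by rw [hci]; ring⟩
    have hinj' : Function.Injective (Function.update (⇑r) p i) := by
      intro q q' hqq
      by_cases h1 : q = p <;> by_cases h2 : q' = p
      · rw [h1, h2]
      · exfalso
        rw [h1, Function.update_self, Function.update_of_ne h2] at hqq
        exact hci (hqq ▸ hrq q' h2)
      · exfalso
        rw [h2, Function.update_self, Function.update_of_ne h1] at hqq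
        exact hci (hqq.symm ▸ hrq q h1)
      · rw [Function.update_of_ne h1, Function.update_of_ne h2] at hqq
        exact r.injective hqq
    set r' : Fin m ↪ Fin n := ⟨Function.update (⇑r) p i, hinj'⟩ with hr'
    set M' : Matrix (Fin m) (Fin m) ℤ := B.submatrix r' id with hM'
    have hM'up : M' = M.updateRow p (fun j => B i j) := by
      ext q j
      rw [hM', Matrix.submatrix_apply, id_eq]
      by_cases h : q = p
      · subst h; rw [Matrix.updateRow_self]
        show B (Function.update (⇑r) p i p) j = B i j
        rw [Function.update_self]
      · rw [Matrix.updateRow_ne h]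
        show B (Function.update (⇑r) p i q) j = M q j
        rw [Function.update_of_ne h]
        simp [hM]
    have hM'x : M' *ᵥ x₀ = Pi.single p (c i) := by
      funext q
      have h1 : (M' *ᵥ x₀) q = (B *ᵥ x₀) (r' q) := by
        simp [hM', Matrix.mulVec, dotProduct, Matrix.submatrix_apply]
      rw [h1, hx₀]
      by_cases h : q = p
      · rw [h]
        have hrp' : r' p = i := by
          show Function.update (⇑r) p i p = i
          rw [Function.update_self]
        rw [hrp']
        simp
      · rw [Pi.single_eq_of_ne h]
        have : r' q = r q := by
          show Function.update (⇑r) p i q = r q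
          rw [Function.update_of_ne h]
        rw [this]; exact hrq q h
    refine ⟨M'.det, ?_, ?_⟩
    · have := hdet r'
      simpa only [Set.mem_insert_iff, Set.mem_singleton_iff] using this
    have hadj : M.det • x₀ = fun k => adjugate M k p * c i₀ := by
      have h1 : adjugate M *ᵥ (M *ᵥ x₀) = M.det • x₀ := by
        rw [Matrix.mulVec_mulVec, Matrix.adjugate_mul, Matrix.smul_mulVec,
          Matrix.one_mulVec]
      rw [← h1, hMx, Matrix.mulVec_single]
      funext k; rfl
    have hcol : ∀ k, adjugate M k p = adjugate M' k p := by
      intro k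
      rw [Matrix.adjugate_apply, Matrix.adjugate_apply]
      congr 1
      ext q j
      by_cases h : q = p
      · subst h; rw [Matrix.updateRow_self, Matrix.updateRow_self]
      · rw [Matrix.updateRow_ne h, Matrix.updateRow_ne h, hM'up, Matrix.updateRow_ne h]
    have h6 : (M' * adjugate M) p p = M'.det := by
      rw [Matrix.mul_apply]
      rw [Finset.sum_congr rfl (fun k _ => by rw [hcol k])]
      rw [← Matrix.mul_apply, Matrix.mul_adjugate]
      simp
    have h3 : (fun j => B i j) ⬝ᵥ x₀ = c i := by rw [← hx₀]; rfl
    calc M.det * c i = (fun j => B i j) ⬝ᵥ (M.det • x₀) := by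
          rw [dotProduct_smul, h3, smul_eq_mul]
      _ = (fun j => B i j) ⬝ᵥ (fun k => adjugate M k p * c i₀) := by rw [hadj]
      _ = ((M' * adjugate M) p p) * c i₀ := by
          rw [Matrix.mul_apply, dotProduct, Finset.sum_mul]
          refine Finset.sum_congr rfl fun k _ => ?_
          have : M' p k = B i k := by rw [hM'up, Matrix.updateRow_self]
          rw [this, mul_assoc]
      _ = c i₀ * M'.det := by rw [h6]; ring
  have hdvd : ∀ i, c i₀ ∣ c i := by
    intro i
    obtain ⟨d, hd, hdc⟩ := hkey i
    rcases hdet1 with h | h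
    · rw [hM] at h  -- align
      rw [h, one_mul] at hdc
      exact ⟨d, hdc⟩
    · rw [hM] at h
      rw [h] at hdc
      exact ⟨-d, by rw [mul_neg, ← hdc]; ring⟩
  have hunit : c i₀ = 1 ∨ c i₀ = -1 := by
    have h1 : c i₀ ∣ 1 := hgcd ▸ Finset.dvd_gcd (fun i _ => hdvd i)
    exact Int.isUnit_iff.mp (isUnit_of_dvd_one h1)
  have hentries : ∀ i, c i = 0 ∨ c i = 1 ∨ c i = -1 := by
    intro i
    obtain ⟨d, hd, hdc⟩ := hkey i
    have hdm : M.det = 1 ∨ M.det = -1 := by rw [hM]; exact hdet1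
    rcases hdm with h | h <;> rcases hunit with h' | h' <;> rcases hd with h'' | h'' | h'' <;>
      rw [h, h', h''] at hdc <;> omega
  refine ⟨hentries, ?_⟩
  intro x hx hsupp
  set BR : Matrix (Fin n) (Fin m) ℝ := B.map (Int.castRingHom ℝ) with hBR
  have hsub : realSpan (LinearMap.range B.mulVecLin) ≤ LinearMap.range BR.mulVecLin := by
    rw [realSpan, Submodule.span_le]
    rintro xv ⟨v, hv, rfl⟩
    obtain ⟨z, hz⟩ := hv
    rw [Matrix.mulVecLin_apply] at hz
    refine LinearMap.mem_range.mpr ⟨fun j => (z j : ℝ), ?_⟩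
    rw [Matrix.mulVecLin_apply]
    funext i
    have h1 := congrFun (castVec_mulVec (Int.castRingHom ℝ) B z) i
    rw [hz] at h1
    exact h1.symm
  obtain ⟨y, hy⟩ := hsub hx
  rw [Matrix.mulVecLin_apply] at hy
  set MR : Matrix (Fin m) (Fin m) ℝ := BR.submatrix r id with hMR
  have hMReq : MR = M.map (Int.castRingHom ℝ) := by
    ext q j; simp [hMR, hBR, hM]
  have hdetR : MR.det ≠ 0 := by
    rw [hMReq, ← RingHom.mapMatrix_apply, ← RingHom.map_det]
    have : M.det ≠ 0 := by rw [hM]; exact hdetZ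
    simpa using this
  have hinjR : Function.Injective (MR.mulVec) :=
    Matrix.mulVec_injective_iff_isUnit.mpr
      ((Matrix.isUnit_iff_isUnit_det MR).mpr (isUnit_iff_ne_zero.mpr hdetR))
  have hMRy : MR *ᵥ y = Pi.single p (x i₀) := by
    funext q
    have h1 : (MR *ᵥ y) q = (BR *ᵥ y) (r q) := by
      simp [hMR, Matrix.mulVec, dotProduct]
    rw [h1, hy]
    by_cases h : q = p
    · subst h; rw [hrp]; simp
    · rw [Pi.single_eq_of_ne h]; exact hsupp _ (hrq q h)
  have hMRx₀ : MR *ᵥ (fun j => ((x₀ j : ℝ))) = Pi.single p ((c i₀ : ℝ)) := by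
    have h1 := castVec_mulVec (Int.castRingHom ℝ) M x₀
    have h2 : MR *ᵥ (fun j => ((x₀ j : ℝ))) = fun q => (((M *ᵥ x₀) q : ℤ) : ℝ) := by
      rw [hMReq]; exact h1.symm
    rw [h2, hMx]
    funext q
    by_cases h : q = p
    · subst h; simp
    · rw [Pi.single_eq_of_ne h, Pi.single_eq_of_ne h]; simp
  have hyx : (c i₀ : ℝ) • y = (x i₀) • (fun j => ((x₀ j : ℝ))) := by
    apply hinjR
    rw [Matrix.mulVec_smul, Matrix.mulVec_smul, hMRy, hMRx₀]
    funext q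
    by_cases h : q = p
    · subst h; simp [mul_comm]
    · simp [Pi.single_eq_of_ne h]
  have hcR : intCastVec c = BR *ᵥ (fun j => ((x₀ j : ℝ))) := by
    funext i
    have h1 := congrFun (castVec_mulVec (Int.castRingHom ℝ) B x₀) i
    rw [hx₀] at h1
    exact h1
  have hc0R : (c i₀ : ℝ) ≠ 0 := Int.cast_ne_zero.mpr hi₀
  refine ⟨x i₀ / (c i₀ : ℝ), ?_⟩
  have h8 : (c i₀ : ℝ) • x = (x i₀) • intCastVec c := by
    have h81 : (c i₀ : ℝ) • x = BR *ᵥ ((c i₀ : ℝ) • y) := by rw [Matrix.mulVec_smul, hy]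
    rw [h81, hyx, Matrix.mulVec_smul, hcR]
  funext i
  have h9 := congrFun h8 i
  simp only [Pi.smul_apply, smul_eq_mul] at h9 ⊢
  field_simp
  linarith [h9]

lemma intCastVec_mem_realSpan {n : ℕ} {L : Submodule ℤ (Fin n → ℤ)} {v : Fin n → ℤ}
    (hv : v ∈ L) : intCastVec v ∈ realSpan L :=
  Submodule.subset_span ⟨v, hv, rfl⟩

lemma finset_gcd_nonneg {ι : Type*} (s : Finset ι) (f : ι → ℤ) : 0 ≤ s.gcd f := by
  classical
  induction s using Finset.induction_on with
  | empty => simp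
  | insert h ih =>
    rw [Finset.gcd_insert, ← Int.coe_gcd]
    exact Int.natCast_nonneg _

lemma floor_int_sub_half (k : ℤ) : ⌊(k : ℝ) - 1/2⌋ = k - 1 := by
  rw [Int.floor_eq_iff]
  constructor <;> push_cast <;> linarith

lemma ceil_int_sub_half (k : ℤ) : ⌈(k : ℝ) - 1/2⌉ = k := by
  rw [Int.ceil_eq_iff]
  constructor <;> push_cast <;> linarith

lemma floor_int_add_half (k : ℤ) : ⌊(k : ℝ) + 1/2⌋ = k := by
  rw [Int.floor_eq_iff]
  constructor <;> push_cast <;> linarith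

lemma ceil_int_add_half (k : ℤ) : ⌈(k : ℝ) + 1/2⌉ = k + 1 := by
  rw [Int.ceil_eq_iff]
  constructor <;> push_cast <;> linarith

/-- for distinct `a, b` in a unimodular lattice `L`, the difference `a - b` is a
circuit of `L` iff `a` and `b` lie on a common closed face of `H_L` of affine dimension `1`. -/
theorem circuit_iff_common_one_dimensional_face
    {n : ℕ} (L : Submodule ℤ (Fin n → ℤ)) (hL : IsUnimodular L)
    (a b : Fin n → ℤ) (ha : a ∈ L) (hb : b ∈ L) (hab : a ≠ b) :
    IsCircuit L (a - b) ↔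
    ∃ u : Fin n → ℝ, u ∈ realSpan L ∧
      intCastVec a ∈ closedFace L u ∧ intCastVec b ∈ closedFace L u ∧
      Module.finrank ℝ (affineSpan ℝ (closedFace L u)).direction = 1 := by
  classical
  set c : Fin n → ℤ := a - b with hc_def
  have hcL : c ∈ L := sub_mem ha hb
  have hc0 : c ≠ 0 := sub_ne_zero.mpr hab
  have haR : intCastVec a ∈ realSpan L := intCastVec_mem_realSpan ha
  have hbR : intCastVec b ∈ realSpan L := intCastVec_mem_realSpan hb
  have hcval : ∀ i, c i = a i - b i := fun i => rfl
  have hcR0 : intCastVec c ≠ 0 := by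
    intro h
    apply hc0
    funext i
    have h1 := congrFun h i
    have : ((c i : ℝ)) = 0 := h1
    exact_mod_cast this
  have habR : intCastVec c = intCastVec a - intCastVec b := by
    funext i
    simp only [intCastVec, hcval i, Pi.sub_apply]
    push_cast
    ring
  constructor
  · -- forward direction
    intro hc
    obtain ⟨hent, hline⟩ := circuit_key L hL c hc
    set u : Fin n → ℝ := fun i => ((a i : ℝ) + (b i : ℝ))/2 with hu
    have huR : u ∈ realSpan L := by
      have h1 : u = (1/2 : ℝ) • intCastVec a + (1/2 : ℝ) • intCastVec b := by
        funext i
        simp only [hu, Pi.add_apply, Pi.smul_apply, intCastVec, smul_eq_mul]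
        ring
      rw [h1]
      exact Submodule.add_mem _ (Submodule.smul_mem _ _ haR) (Submodule.smul_mem _ _ hbR)
    -- floor and ceiling values
    have hflce : ∀ i, (⌊u i⌋ = min (a i) (b i)) ∧ (⌈u i⌉ = max (a i) (b i)) := by
      intro i
      rcases hent i with h | h | h
      · have hab' : a i = b i := by have := hcval i; omega
        have h1 : u i = ((a i : ℤ) : ℝ) := by
          simp only [hu, ← hab']; push_cast; ring
        rw [h1, Int.floor_intCast, Int.ceil_intCast]
        omega
      · have hab' : b i = a i - 1 := by have := hcval i; omega
        have h1 : u i = ((a i : ℤ) : ℝ) - 1/2 := by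
          simp only [hu, hab']; push_cast; ring
        rw [h1, floor_int_sub_half, ceil_int_sub_half]
        omega
      · have hab' : b i = a i + 1 := by have := hcval i; omega
        have h1 : u i = ((a i : ℤ) : ℝ) + 1/2 := by
          simp only [hu, hab']; push_cast; ring
        rw [h1, floor_int_add_half, ceil_int_add_half]
        omega
    have haF : intCastVec a ∈ closedFace L u := by
      refine ⟨haR, fun i => ?_⟩
      obtain ⟨h1, h2⟩ := hflce i
      rw [h1, h2]
      simp only [intCastVec]
      constructor
      · exact_mod_cast min_le_left (a i) (b i)
      · exact_mod_cast le_max_left (a i) (b i)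
    have hbF : intCastVec b ∈ closedFace L u := by
      refine ⟨hbR, fun i => ?_⟩
      obtain ⟨h1, h2⟩ := hflce i
      rw [h1, h2]
      simp only [intCastVec]
      constructor
      · exact_mod_cast min_le_right (a i) (b i)
      · exact_mod_cast le_max_right (a i) (b i)
    refine ⟨u, huR, haF, hbF, ?_⟩
    rw [direction_affineSpan]
    have hvs : vectorSpan ℝ (closedFace L u) = Submodule.span ℝ {intCastVec c} := by
      apply le_antisymm
      · rw [vectorSpan_def, Submodule.span_le]
        rintro d ⟨x, hx, y, hy, rfl⟩
        have hmul : ∀ z : Fin n → ℝ, z ∈ closedFace L u →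
            ∃ t : ℝ, z - intCastVec b = t • intCastVec c := by
          intro z hz
          apply hline
          · exact Submodule.sub_mem _ hz.1 hbR
          · intro j hj
            have hab' : a j = b j := by have := hcval j; omega
            obtain ⟨h1, h2⟩ := hflce j
            rw [hab'] at h1 h2
            have h3 := (hz.2 j).1
            have h4 := (hz.2 j).2
            rw [h1] at h3
            rw [h2] at h4
            simp only [min_self] at h3
            simp only [max_self] at h4
            have : z j = ((b j : ℝ)) := le_antisymm h4 h3
            simp [Pi.sub_apply, this, intCastVec]
        obtain ⟨t, ht⟩ := hmul x hx
        obtain ⟨s, hs⟩ := hmul y hy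
        show x -ᵥ y ∈ (Submodule.span ℝ {intCastVec c} : Set (Fin n → ℝ))
        have h6 : x -ᵥ y = (t - s) • intCastVec c := by
          rw [vsub_eq_sub, sub_smul, ← ht, ← hs]
          abel
        rw [h6]
        exact Submodule.smul_mem _ _ (Submodule.mem_span_singleton_self _)
      · rw [Submodule.span_singleton_le_iff_mem, habR]
        exact vsub_mem_vectorSpan ℝ haF hbF
    rw [hvs]
    exact finrank_span_singleton hcR0
  · -- backward direction
    rintro ⟨u, huR, haF, hbF, hdim⟩
    have hsmall : ∀ i, c i = 0 ∨ c i = 1 ∨ c i = -1 := by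
      intro i
      have h1 := haF.2 i
      have h2 := hbF.2 i
      have h3 : (⌈u i⌉ : ℝ) ≤ (⌊u i⌋ : ℝ) + 1 := by
        exact_mod_cast Int.ceil_le_floor_add_one (u i)
      have ha1 : (⌊u i⌋ : ℝ) ≤ ((a i : ℝ)) := h1.1
      have ha2 : ((a i : ℝ)) ≤ (⌈u i⌉ : ℝ) := h1.2
      have hb1 : (⌊u i⌋ : ℝ) ≤ ((b i : ℝ)) := h2.1
      have hb2 : ((b i : ℝ)) ≤ (⌈u i⌉ : ℝ) := h2.2
      have h4 : ((a i : ℝ)) - ((b i : ℝ)) ≤ 1 := by linarith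
      have h5 : ((b i : ℝ)) - ((a i : ℝ)) ≤ 1 := by linarith
      have h6 : ((a i - b i : ℤ) : ℝ) ≤ ((1 : ℤ) : ℝ) := by push_cast; linarith
      have h7 : ((b i - a i : ℤ) : ℝ) ≤ ((1 : ℤ) : ℝ) := by push_cast; linarith
      have h8 : a i - b i ≤ 1 := by exact_mod_cast h6
      have h9 : b i - a i ≤ 1 := by exact_mod_cast h7
      have := hcval i
      omega
    have hgcd : Finset.univ.gcd c = 1 := by
      obtain ⟨i, hi⟩ := Function.ne_iff.mp hc0
      have hd : Finset.univ.gcd c ∣ c i := Finset.gcd_dvd (Finset.mem_univ i)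
      have h1 : c i = 1 ∨ c i = -1 := by
        rcases hsmall i with h | h | h
        · exact absurd h hi
        · exact Or.inl h
        · exact Or.inr h
      have hdd : Finset.univ.gcd c ∣ 1 := by
        rcases h1 with h | h
        · rwa [h] at hd
        · rw [h] at hd
          exact (dvd_neg).mp hd
      have hnn := finset_gcd_nonneg Finset.univ c
      have := Int.isUnit_iff.mp (isUnit_of_dvd_one hdd)
      omega
    refine ⟨hcL, hc0, hgcd, ?_⟩
    intro w hw hw0 hsub
    -- the direction contains intCastVec c
    have hcD : intCastVec c ∈ (affineSpan ℝ (closedFace L u)).direction := by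
      rw [direction_affineSpan, habR]
      exact vsub_mem_vectorSpan ℝ haF hbF
    have hcDne : (⟨intCastVec c, hcD⟩ : (affineSpan ℝ (closedFace L u)).direction) ≠ 0 := by
      rw [Ne, Submodule.mk_eq_zero]
      exact hcR0
    have hone := (finrank_eq_one_iff_of_nonzero' _ hcDne).mp hdim
    -- midpoint perturbation
    set C : ℕ := Finset.univ.sup fun i => (w i).natAbs with hC
    have hCb : ∀ i, |((w i : ℝ))| ≤ (C : ℝ) := by
      intro i
      have h1 : (w i).natAbs ≤ C := Finset.le_sup (f := fun i => (w i).natAbs) (Finset.mem_univ i)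
      have h2 : |w i| ≤ (C : ℤ) := by
        rw [Int.abs_eq_natAbs]
        exact_mod_cast h1
      calc |((w i : ℝ))| = ((|w i| : ℤ) : ℝ) := by rw [Int.cast_abs]
        _ ≤ ((C : ℤ) : ℝ) := by exact_mod_cast h2
        _ = (C : ℝ) := by push_cast; ring
    set ε : ℝ := 1/(2*((C : ℝ)+1)) with hε_def
    have hC1 : (0:ℝ) < (C:ℝ) + 1 := by positivity
    have hε : 0 < ε := by rw [hε_def]; positivity
    have hεw : ∀ i, |ε * ((w i : ℝ))| ≤ 1/2 := by
      intro i
      rw [abs_mul, abs_of_pos hε]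
      have h1 : |((w i : ℝ))| ≤ (C:ℝ)+1 := le_trans (hCb i) (by linarith)
      have h2 : ε * |((w i : ℝ))| ≤ ε * ((C:ℝ)+1) :=
        mul_le_mul_of_nonneg_left h1 (le_of_lt hε)
      have h3 : ε * ((C:ℝ)+1) = 1/2 := by rw [hε_def]; field_simp
      linarith
    set md : Fin n → ℝ := fun i => ((a i : ℝ) + (b i : ℝ))/2 with hmd
    have hmdR : md ∈ realSpan L := by
      have h1 : md = (1/2 : ℝ) • intCastVec a + (1/2 : ℝ) • intCastVec b := by
        funext i
        simp only [hmd, Pi.add_apply, Pi.smul_apply, intCastVec, smul_eq_mul]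
        ring
      rw [h1]
      exact Submodule.add_mem _ (Submodule.smul_mem _ _ haR) (Submodule.smul_mem _ _ hbR)
    have hwR : intCastVec w ∈ realSpan L := intCastVec_mem_realSpan hw
    have hface : ∀ t : ℝ, (∀ i, |t * ((w i : ℝ))| ≤ 1/2) →
        (md + t • intCastVec w) ∈ closedFace L u := by
      intro t htw
      refine ⟨Submodule.add_mem _ hmdR (Submodule.smul_mem _ _ hwR), fun i => ?_⟩
      have hxi : (md + t • intCastVec w) i = md i + t * ((w i : ℝ)) := rfl
      by_cases hwi : w i = 0
      · rw [hxi, hwi]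
        have h1 := haF.2 i
        have h2 := hbF.2 i
        simp only [intCastVec] at h1 h2
        simp only [Int.cast_zero, mul_zero, add_zero, hmd]
        constructor
        · have := h1.1; have := h2.1; linarith
        · have := h1.2; have := h2.2; linarith
      · have hci : c i ≠ 0 := hsub (show i ∈ {i | w i ≠ 0} from hwi)
        have h1 := haF.2 i
        have h2 := hbF.2 i
        simp only [intCastVec] at h1 h2
        have ha1 : ⌊u i⌋ ≤ a i := by exact_mod_cast h1.1
        have ha2 : a i ≤ ⌈u i⌉ := by exact_mod_cast h1.2
        have hb1 : ⌊u i⌋ ≤ b i := by exact_mod_cast h2.1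
        have hb2 : b i ≤ ⌈u i⌉ := by exact_mod_cast h2.2
        have h3 : ⌈u i⌉ ≤ ⌊u i⌋ + 1 := Int.ceil_le_floor_add_one (u i)
        have hne : a i ≠ b i := by have := hcval i; omega
        have hsum : a i + b i = ⌊u i⌋ + ⌈u i⌉ := by omega
        have hce : ⌈u i⌉ = ⌊u i⌋ + 1 := by omega
        have hceR : ((⌈u i⌉ : ℝ)) = ((⌊u i⌋ : ℝ)) + 1 := by exact_mod_cast hce
        have hsumR : ((a i : ℝ)) + ((b i : ℝ)) = ((⌊u i⌋ : ℝ)) + ((⌈u i⌉ : ℝ)) := by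
          exact_mod_cast hsum
        have hmdi : md i = (⌊u i⌋ : ℝ) + 1/2 := by
          have : md i = (((a i : ℝ)) + ((b i : ℝ)))/2 := rfl
          rw [this, hsumR, hceR]
          ring
        have habs := abs_le.mp (htw i)
        rw [hxi, hmdi]
        constructor
        · have := habs.1; linarith
        · have := habs.2; linarith
    have hxp := hface ε hεw
    have hxm := hface (-ε) (by intro i; rw [show -ε * ((w i : ℝ)) = -(ε * ((w i : ℝ))) by ring, abs_neg]; exact hεw i)
    have hdiff : (md + ε • intCastVec w) -ᵥ (md + (-ε) • intCastVec w) = (2*ε) • intCastVec w := by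
      rw [vsub_eq_sub]
      funext i
      simp only [Pi.sub_apply, Pi.add_apply, Pi.smul_apply, smul_eq_mul]
      ring
    have hwD : (2*ε) • intCastVec w ∈ (affineSpan ℝ (closedFace L u)).direction := by
      rw [direction_affineSpan, ← hdiff]
      exact vsub_mem_vectorSpan ℝ hxp hxm
    obtain ⟨t, ht⟩ := hone ⟨(2*ε) • intCastVec w, hwD⟩
    have htv : t • intCastVec c = (2*ε) • intCastVec w := congrArg Subtype.val ht
    have ht0 : t ≠ 0 := by
      intro h0
      rw [h0, zero_smul] at htv
      have h2ε : (2*ε) ≠ 0 := by positivity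
      have hwz : intCastVec w = 0 := by
        rcases smul_eq_zero.mp htv.symm with h | h
        · exact absurd h h2ε
        · exact h
      apply hw0
      funext i
      have h4 := congrFun hwz i
      have : ((w i : ℝ)) = 0 := h4
      exact_mod_cast this
    apply Set.Subset.antisymm hsub
    intro i hi
    have hci : c i ≠ 0 := hi
    show w i ≠ 0
    intro hwi
    have h1 := congrFun htv i
    simp only [Pi.smul_apply, smul_eq_mul, intCastVec] at h1
    rw [hwi] at h1
    have h2 : t * ((c i : ℝ)) = 0 := by rw [h1]; simp
    have h3 : ((c i : ℝ)) = 0 := (mul_eq_zero.mp h2).resolve_left ht0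
    exact hci (by exact_mod_cast h3)
end

section
/- Let k be a field, L a subgroup of ℤ^n, and J_L ⊆ S = k[x_1,…,x_n,y_1,…,y_n] its Lawrence ideal. For a Graver element v of L let g_v = x^{v⁺} y^{v⁻} − x^{v⁻} y^{v⁺}. Then the binomials g_v, as v ranges over the Graver elements of L, generate J_L, and this generating set is minimal: for every Graver element w, the binomial g_w does not lie in the ideal generated by the binomials g_v with v ≠ w and v ≠ −w. -/
open MvPolynomial

/-- The Lawrence ideal `J_L` of a lattice `L ⊆ ℤ^ι`, in the polynomial ring
`k[x_i, y_i : i ∈ ι]`: it is generated by the binomials `x^a y^b - x^b y^a` with `a - b ∈ L`. -/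
noncomputable def lawrenceIdeal (k : Type*) [Field k] {ι : Type*} [Fintype ι]
    (L : Submodule ℤ (ι → ℤ)) : Ideal (MvPolynomial (ι ⊕ ι) k) :=
  Ideal.span { f | ∃ a b : ι → ℕ,
    (fun i => (a i : ℤ) - (b i : ℤ)) ∈ L ∧
    f = (∏ i, X (Sum.inl i) ^ a i) * (∏ i, X (Sum.inr i) ^ b i)
      - (∏ i, X (Sum.inl i) ^ b i) * (∏ i, X (Sum.inr i) ^ a i) }

/-- The binomial `g_v = x^{v⁺} y^{v⁻} - x^{v⁻} y^{v⁺}` associated with a vector `v ∈ ℤ^n`. -/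
noncomputable def graverBinomial (k : Type*) [Field k] {n : ℕ} (v : Fin n → ℤ) :
    MvPolynomial (Fin n ⊕ Fin n) k :=
  (∏ i, X (Sum.inl i) ^ (v i).toNat) * (∏ i, X (Sum.inr i) ^ (-v i).toNat)
    - (∏ i, X (Sum.inl i) ^ (-v i).toNat) * (∏ i, X (Sum.inr i) ^ (v i).toNat)

noncomputable def EE {n : ℕ} (a b : Fin n → ℕ) : (Fin n ⊕ Fin n) →₀ ℕ :=
  Finsupp.equivFunOnFinite.symm (Sum.elim a b)

@[simp] lemma EE_inl {n : ℕ} (a b : Fin n → ℕ) (i) : EE a b (Sum.inl i) = a i := rfl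
@[simp] lemma EE_inr {n : ℕ} (a b : Fin n → ℕ) (i) : EE a b (Sum.inr i) = b i := rfl

lemma EE_add {n : ℕ} (a b a' b' : Fin n → ℕ) :
    EE a b + EE a' b' = EE (a+a') (b+b') := by
  ext u; cases u <;> simp

lemma EE_mul {k : Type*} [Field k] {n : ℕ} (a b a' b' : Fin n → ℕ) :
    monomial (EE a b) (1:k) * monomial (EE a' b') 1 = monomial (EE (a+a') (b+b')) 1 := by
  rw [monomial_mul, one_mul, EE_add]

lemma prod_eq_monomial {k : Type*} [Field k] {n : ℕ} (a b : Fin n → ℕ) :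
    (∏ i, X (Sum.inl i) ^ a i) * (∏ i, X (Sum.inr i) ^ b i)
      = monomial (EE a b) (1 : k) := by
  rw [← prod_X_pow_eq_monomial,
    Finset.prod_subset (Finset.subset_univ (EE a b).support)
      (fun x _ hx => by rw [Finsupp.notMem_support_iff.mp hx, pow_zero]),
    Fintype.prod_sum_type]
  rfl

lemma graverBinomial_eq {k : Type*} [Field k] {n : ℕ} (v : Fin n → ℤ) :
    graverBinomial k v
      = monomial (EE (fun i => (v i).toNat) (fun i => (-v i).toNat)) (1:k)
        - monomial (EE (fun i => (-v i).toNat) (fun i => (v i).toNat)) 1 := by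
  rw [graverBinomial, prod_eq_monomial, prod_eq_monomial]

lemma binom_identity {k : Type*} [Field k] {n : ℕ} (A B A' B' : Fin n → ℕ)
    (hA : ∀ i, A' i ≤ A i) (hB : ∀ i, B' i ≤ B i) :
    monomial (EE A B) (1:k) - monomial (EE B A) 1
      = monomial (EE (A - A') (B - B')) 1
          * (monomial (EE A' B') 1 - monomial (EE B' A') 1)
        + monomial (EE B' A') 1
          * (monomial (EE (A - A') (B - B')) 1 - monomial (EE (B - B') (A - A')) 1) := by
  have h1 : A - A' + A' = A := funext fun i => by
    simp only [Pi.sub_apply, Pi.add_apply]; have := hA i; omega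
  have h2 : B - B' + B' = B := funext fun i => by
    simp only [Pi.sub_apply, Pi.add_apply]; have := hB i; omega
  rw [mul_sub, mul_sub, EE_mul, EE_mul, EE_mul, EE_mul, h1, h2,
    show B' + (A - A') = A - A' + B' from add_comm _ _,
    show A' + (B - B') = B - B' + A' from add_comm _ _,
    show B' + (B - B') = B from (add_comm _ _).trans h2,
    show A' + (A - A') = A from (add_comm _ _).trans h1]
  abel

/-- every nonzero lattice vector sign-dominates a Graver element -/
lemma exists_graver_le {n : ℕ} (L : Submodule ℤ (Fin n → ℤ)) :
    ∀ (N : ℕ) (v : Fin n → ℤ), (∑ i, (v i).natAbs) ≤ N → v ∈ L → v ≠ 0 →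
    ∃ u, IsGraver L u ∧ (∀ i, (u i).toNat ≤ (v i).toNat)
      ∧ (∀ i, (-u i).toNat ≤ (-v i).toNat) := by
  intro N
  induction N with
  | zero =>
    intro v hN hv hv0
    exfalso; apply hv0; funext i
    have hi : (v i).natAbs = 0 := by
      have := Finset.sum_eq_zero_iff.mp (Nat.le_zero.mp hN) i (Finset.mem_univ i)
      exact this
    simpa using Int.natAbs_eq_zero.mp hi
  | succ N ih =>
    intro v hN hv hv0
    by_cases hg : IsGraver L v
    · exact ⟨v, hg, fun i => le_rfl, fun i => le_rfl⟩
    · have : ∃ w ∈ L, w ≠ 0 ∧ (∀ i, (w i).toNat ≤ (v i).toNat) ∧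
          (∀ i, (-w i).toNat ≤ (-v i).toNat) ∧ w ≠ v := by
        by_contra hcon
        push_neg at hcon
        exact hg ⟨hv, hv0, fun w hw hw0 h1 h2 => hcon w hw hw0 h1 h2⟩
      obtain ⟨w, hwL, hw0, h1, h2, hwv⟩ := this
      have hlt : (∑ i, (w i).natAbs) < ∑ i, (v i).natAbs := by
        obtain ⟨i0, hi0⟩ : ∃ i, w i ≠ v i := by
          by_contra h; push_neg at h; exact hwv (funext h)
        refine Finset.sum_lt_sum (fun i _ => ?_) ⟨i0, Finset.mem_univ i0, ?_⟩
        · have := h1 i; have := h2 i; omega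
        · have := h1 i0; have := h2 i0; omega
      obtain ⟨u, hu, g1, g2⟩ := ih w (by omega) hwL hw0
      exact ⟨u, hu, fun i => le_trans (g1 i) (h1 i), fun i => le_trans (g2 i) (h2 i)⟩

lemma graverBinomial_mem_span {k : Type*} [Field k] {n : ℕ} (L : Submodule ℤ (Fin n → ℤ)) :
    ∀ (N : ℕ) (v : Fin n → ℤ), (∑ i, (v i).natAbs) ≤ N → v ∈ L →
    graverBinomial k v ∈ Ideal.span {f | ∃ u, IsGraver L u ∧ f = graverBinomial k u} := by
  intro N
  induction N with
  | zero =>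
    intro v hN _
    have hv0 : v = 0 := by
      funext i
      have := Finset.sum_eq_zero_iff.mp (Nat.le_zero.mp hN) i (Finset.mem_univ i)
      simpa using Int.natAbs_eq_zero.mp this
    subst hv0
    simp [graverBinomial_eq]
  | succ N ih =>
    intro v hN hvL
    by_cases hv0 : v = 0
    · subst hv0; simp [graverBinomial_eq]
    obtain ⟨u, hu, h1, h2⟩ := exists_graver_le L (N+1) v hN hvL hv0
    have e1 : (fun i => ((v - u) i).toNat)
        = (fun i => (v i).toNat) - (fun i => (u i).toNat) := by
      funext i
      simp only [Pi.sub_apply]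
      have := h1 i; have := h2 i; omega
    have e2 : (fun i => (-(v - u) i).toNat)
        = (fun i => (-v i).toNat) - (fun i => (-u i).toNat) := by
      funext i
      simp only [Pi.sub_apply, Pi.neg_apply]
      have := h1 i; have := h2 i; omega
    have hid : graverBinomial k v
        = monomial (EE ((fun i => (v i).toNat) - fun i => (u i).toNat)
              ((fun i => (-v i).toNat) - fun i => (-u i).toNat)) 1 * graverBinomial k u
          + monomial (EE (fun i => (-u i).toNat) (fun i => (u i).toNat)) 1
              * graverBinomial k (v - u) := by
      rw [graverBinomial_eq, graverBinomial_eq, graverBinomial_eq, e1, e2]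
      exact binom_identity _ _ _ _ h1 h2
    rw [hid]
    refine add_mem (Ideal.mul_mem_left _ _ (Ideal.subset_span ⟨u, hu, rfl⟩))
      (Ideal.mul_mem_left _ _ (ih (v - u) ?_ (sub_mem hvL hu.1)))
    -- norm decreases
    obtain ⟨i0, hi0⟩ : ∃ i, u i ≠ 0 := by
      by_contra h; push_neg at h; exact hu.2.1 (funext h)
    have hlt : (∑ i, ((v - u) i).natAbs) < ∑ i, (v i).natAbs := by
      refine Finset.sum_lt_sum (fun i _ => ?_) ⟨i0, Finset.mem_univ i0, ?_⟩
      · have := h1 i; have := h2 i; simp only [Pi.sub_apply]; omega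
      · have := h1 i0; have := h2 i0; simp only [Pi.sub_apply]; omega
    omega

/-- the binomials `g_v`, for `v` a Graver element of `L`, generate the Lawrence
ideal `J_L`, and minimally so: no `g_w` lies in the ideal generated by the other Graver
binomials (omitting both `w` and `-w`). -/
theorem graver_binomials_generate_lawrence_minimally
    (k : Type*) [Field k] {n : ℕ} (L : Submodule ℤ (Fin n → ℤ)) :
    Ideal.span {f | ∃ v, IsGraver L v ∧ f = graverBinomial k v} = lawrenceIdeal k L ∧
    ∀ w, IsGraver L w →
      graverBinomial k w ∉
        Ideal.span {f | ∃ v, IsGraver L v ∧ v ≠ w ∧ v ≠ -w ∧ f = graverBinomial k v} := by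
  classical
  constructor
  · apply le_antisymm
    · rw [Ideal.span_le]
      rintro f ⟨v, hv, rfl⟩
      refine Ideal.subset_span ⟨(fun i => (v i).toNat), (fun i => (-v i).toNat), ?_, rfl⟩
      have hfun : (fun i => (((v i).toNat : ℤ)) - (((-v i).toNat : ℤ))) = v :=
        funext fun i => by omega
      rw [hfun]; exact hv.1
    · rw [lawrenceIdeal, Ideal.span_le]
      rintro f ⟨a, b, hab, rfl⟩
      have ea : (fun i => min (a i) (b i)) + (fun i => (((a i : ℤ) - b i)).toNat) = a :=
        funext fun i => by simp only [Pi.add_apply]; omega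
      have eb : (fun i => min (a i) (b i)) + (fun i => ((-((a i : ℤ) - b i))).toNat) = b :=
        funext fun i => by simp only [Pi.add_apply]; omega
      have key : (∏ i, X (Sum.inl i) ^ a i) * (∏ i, X (Sum.inr i) ^ b i)
          - (∏ i, X (Sum.inl i) ^ b i) * (∏ i, X (Sum.inr i) ^ a i)
          = monomial (EE (fun i => min (a i) (b i)) (fun i => min (a i) (b i))) (1:k)
              * graverBinomial k (fun i => (a i : ℤ) - b i) := by
        rw [prod_eq_monomial, prod_eq_monomial, graverBinomial_eq, mul_sub, EE_mul, EE_mul,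
          ea, eb]
      rw [key]
      exact Ideal.mul_mem_left _ _ (graverBinomial_mem_span L _ _ le_rfl hab)
  · rintro w hw hmem
    rw [Ideal.span, Submodule.mem_span_set'] at hmem
    obtain ⟨m, c, g, hsum⟩ := hmem
    set μ := EE (fun i => (w i).toNat) (fun i => (-w i).toNat) with hμ
    have hzero : coeff μ (graverBinomial k w) = 0 := by
      rw [← hsum, coeff_sum]
      refine Finset.sum_eq_zero fun j _ => ?_
      obtain ⟨v, hv, hvw, hvw', hgv⟩ := (g j).2
      rw [smul_eq_mul, hgv, graverBinomial_eq, mul_sub, coeff_sub,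
        coeff_mul_monomial', coeff_mul_monomial', if_neg, if_neg, sub_zero]
      · -- ¬ EE v⁻ v⁺ ≤ μ
        intro hle
        have hl : ∀ i, (-v i).toNat ≤ (w i).toNat := fun i => by
          simpa [hμ] using Finsupp.le_def.mp hle (Sum.inl i)
        have hr : ∀ i, (v i).toNat ≤ (-w i).toNat := fun i => by
          simpa [hμ] using Finsupp.le_def.mp hle (Sum.inr i)
        have hvw2 : -v = w := by
          refine hw.2.2 (-v) (neg_mem hv.1) (neg_ne_zero.mpr hv.2.1)
            (fun i => by simpa using hl i) (fun i => by simpa using hr i)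
        exact hvw' (by rw [← hvw2, neg_neg])
      · -- ¬ EE v⁺ v⁻ ≤ μ
        intro hle
        have hl : ∀ i, (v i).toNat ≤ (w i).toNat := fun i => by
          simpa [hμ] using Finsupp.le_def.mp hle (Sum.inl i)
        have hr : ∀ i, (-v i).toNat ≤ (-w i).toNat := fun i => by
          simpa [hμ] using Finsupp.le_def.mp hle (Sum.inr i)
        exact hvw (hw.2.2 v hv.1 hv.2.1 hl hr)
    have hone : coeff μ (graverBinomial k w) = 1 := by
      rw [graverBinomial_eq, coeff_sub, coeff_monomial, coeff_monomial, if_pos rfl, if_neg,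
        sub_zero]
      intro heq
      obtain ⟨i0, hi0⟩ : ∃ i, w i ≠ 0 := by
        by_contra h; push_neg at h; exact hw.2.1 (funext h)
      have h1 : (-w i0).toNat = (w i0).toNat := by
        have := congrFun (congrArg (fun (f : (Fin n ⊕ Fin n) →₀ ℕ) => (f : (Fin n ⊕ Fin n) → ℕ))
          heq) (Sum.inl i0)
        simpa [hμ] using this
      omega
    rw [hone] at hzero
    exact one_ne_zero hzero
end
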